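/- arXiv:1509.03046 — 3 statements merged into one kernel-verified Lean document; each statement's English description precedes it below -/
import Mathlib

section
/- For every symmetric measurable kernel W : [0,1]^2 → [-1,1], the cut norm ‖W‖_□ = sup over measurable sets S, T ⊆ [0,1] of |∫_{S×T} W(x,y) dx dy| satisfies ‖W‖_□ ≥ (1/4) · t*(C4,W), where t*(C4,W) is the homomorphism density of the 4-cycle in W. -/
open MeasureTheory

noncomputable section

def I01 : Set ℝ := Set.Icc 0 1

/-- The cut norm of a kernel on `[0,1]^2`. -/
def cutNorm (W : ℝ → ℝ → ℝ) : ℝ :=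
  sSup {c : ℝ | ∃ S T : Set ℝ, MeasurableSet S ∧ MeasurableSet T ∧
    S ⊆ I01 ∧ T ⊆ I01 ∧ c = |∫ x in S, ∫ y in T, W x y|}

namespace C4Aux

abbrev mu01 : Measure ℝ := volume.restrict I01

instance : IsProbabilityMeasure mu01 := by
  constructor; simp [I01, Real.volume_Icc]

lemma finite_sub {s : Set ℝ} (hs : s ⊆ I01) : IsFiniteMeasure (volume.restrict s) := by
  constructor
  rw [Measure.restrict_apply_univ]
  exact lt_of_le_of_lt (measure_mono hs) (by simp [I01, Real.volume_Icc])

lemma vol_sub_le {s : Set ℝ} (hs : s ⊆ I01) : volume.restrict s Set.univ ≤ 1 := by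
  rw [Measure.restrict_apply_univ]
  exact le_trans (measure_mono hs) (by simp [I01, Real.volume_Icc])

lemma integrable_bdd {α : Type*} [MeasurableSpace α] {ν : Measure α} [IsFiniteMeasure ν]
    {F : α → ℝ} (hm : AEStronglyMeasurable F ν) (hb : ∀ x, |F x| ≤ 1) :
    Integrable F ν :=
  Integrable.mono' (integrable_const 1) hm (ae_of_all _ fun x => by simpa using hb x)

lemma norm_int_le_one {ν : Measure ℝ} [IsFiniteMeasure ν] (hν : ν Set.univ ≤ 1)
    {F : ℝ → ℝ} (hb : ∀ x, |F x| ≤ 1) : |∫ x, F x ∂ν| ≤ 1 := by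
  have h := norm_integral_le_of_norm_le_const (μ := ν) (C := 1)
    (f := F) (ae_of_all _ fun x => by simpa using hb x)
  have h2 : (ν Set.univ).toReal ≤ 1 := by
    have := ENNReal.toReal_mono (by norm_num) hν
    simpa using this
  rw [Real.norm_eq_abs] at h
  linarith [show ν.real Set.univ = (ν Set.univ).toReal from rfl]

lemma abs_mul_le_one {a b : ℝ} (ha : |a| ≤ 1) (hb : |b| ≤ 1) : |a * b| ≤ 1 := by
  rw [abs_mul]; exact mul_le_one₀ ha (abs_nonneg b) hb

lemma swap_int {ν₁ ν₂ : Measure ℝ} [IsFiniteMeasure ν₁] [IsFiniteMeasure ν₂]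
    {F : ℝ → ℝ → ℝ} (hm : AEStronglyMeasurable (fun p : ℝ × ℝ => F p.1 p.2) (ν₁.prod ν₂))
    (hb : ∀ x y, |F x y| ≤ 1) :
    ∫ x, (∫ y, F x y ∂ν₂) ∂ν₁ = ∫ y, (∫ x, F x y ∂ν₁) ∂ν₂ :=
  integral_integral_swap (integrable_bdd hm (fun p => hb p.1 p.2))

lemma cut_bddAbove (W : ℝ → ℝ → ℝ) (hbd : ∀ x y, |W x y| ≤ 1) :
    BddAbove {c : ℝ | ∃ S T : Set ℝ, MeasurableSet S ∧ MeasurableSet T ∧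
      S ⊆ I01 ∧ T ⊆ I01 ∧ c = |∫ x in S, ∫ y in T, W x y|} := by
  refine ⟨1, ?_⟩
  rintro c ⟨S, T, hS, hT, hSs, hTs, rfl⟩
  haveI := finite_sub hSs
  haveI := finite_sub hTs
  exact norm_int_le_one (vol_sub_le hSs) fun x =>
    norm_int_le_one (vol_sub_le hTs) fun y => hbd x y

lemma elem_le_cutNorm (W : ℝ → ℝ → ℝ) (hbd : ∀ x y, |W x y| ≤ 1)
    {S T : Set ℝ} (hS : MeasurableSet S) (hT : MeasurableSet T)
    (hSs : S ⊆ I01) (hTs : T ⊆ I01) :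
    |∫ x in S, ∫ y in T, W x y| ≤ cutNorm W :=
  le_csSup (cut_bddAbove W hbd) ⟨S, T, hS, hT, hSs, hTs, rfl⟩

lemma cutNorm_nonneg (W : ℝ → ℝ → ℝ) (hbd : ∀ x y, |W x y| ≤ 1) : 0 ≤ cutNorm W := by
  have h := elem_le_cutNorm W hbd (S := ∅) (T := ∅) MeasurableSet.empty
    MeasurableSet.empty (Set.empty_subset _) (Set.empty_subset _)
  simpa using h

lemma cutNorm_neg (W : ℝ → ℝ → ℝ) : cutNorm (fun x y => -W x y) = cutNorm W := by
  have key : ∀ S T : Set ℝ, |∫ x in S, ∫ y in T, -W x y| = |∫ x in S, ∫ y in T, W x y| := by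
    intro S T
    have : ∀ x, ∫ y in T, -W x y = -∫ y in T, W x y := fun x => integral_neg _
    simp_rw [this, integral_neg, abs_neg]
  unfold cutNorm
  congr 1
  ext c
  constructor
  · rintro ⟨S, T, hS, hT, hSs, hTs, rfl⟩
    exact ⟨S, T, hS, hT, hSs, hTs, by simpa using key S T⟩
  · rintro ⟨S, T, hS, hT, hSs, hTs, rfl⟩
    exact ⟨S, T, hS, hT, hSs, hTs, by simpa using (key S T).symm⟩

/-- Core: bilinear form with `[0,1]`-valued test functions is at most the cut norm. -/
lemma bilinear_le (W : ℝ → ℝ → ℝ)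
    (hmeas : Measurable fun p : ℝ × ℝ => W p.1 p.2)
    (hbd : ∀ x y, |W x y| ≤ 1)
    (f g : ℝ → ℝ) (hf : Measurable f) (hg : Measurable g)
    (hf0 : ∀ x, 0 ≤ f x) (hf1 : ∀ x, f x ≤ 1)
    (hg0 : ∀ x, 0 ≤ g x) (hg1 : ∀ x, g x ≤ 1) :
    ∫ x, (∫ y, W x y * f x * g y ∂mu01) ∂mu01 ≤ cutNorm W := by
  have hgb : ∀ y, |g y| ≤ 1 := fun y => abs_le.mpr ⟨by linarith [hg0 y], hg1 y⟩
  have hfb : ∀ x, |f x| ≤ 1 := fun x => abs_le.mpr ⟨by linarith [hf0 x], hf1 x⟩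
  set h : ℝ → ℝ := fun x => ∫ y, W x y * g y ∂mu01 with hh
  have hWg : Measurable fun p : ℝ × ℝ => W p.1 p.2 * g p.2 :=
    hmeas.mul (hg.comp measurable_snd)
  have hhm : StronglyMeasurable h := hWg.stronglyMeasurable.integral_prod_right'
  have hWgb : ∀ x y, |W x y * g y| ≤ 1 := fun x y => abs_mul_le_one (hbd x y) (hgb y)
  have hhb : ∀ x, |h x| ≤ 1 := fun x =>
    norm_int_le_one (le_of_eq (measure_univ)) fun y => hWgb x y
  -- step 1
  have step1 : ∫ x, (∫ y, W x y * f x * g y ∂mu01) ∂mu01 = ∫ x, f x * h x ∂mu01 := by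
    refine integral_congr_ae (ae_of_all _ fun x => ?_)
    have : ∀ y, W x y * f x * g y = f x * (W x y * g y) := fun y => by ring
    simp_rw [this]
    rw [integral_const_mul]
  set S : Set ℝ := {x | 0 < h x} with hSdef
  have hSm : MeasurableSet S := measurableSet_lt measurable_const hhm.measurable
  -- step 2
  have step2 : ∫ x, f x * h x ∂mu01 ≤ ∫ x, S.indicator h x ∂mu01 := by
    refine integral_mono ?_ ?_ ?_
    · exact integrable_bdd ((hf.mul hhm.measurable).aestronglyMeasurable)
        (fun x => abs_mul_le_one (hfb x) (hhb x))
    · refine integrable_bdd ((hhm.measurable.indicator hSm).aestronglyMeasurable) fun x => ?_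
      by_cases hx : x ∈ S
      · simpa [Set.indicator_of_mem hx] using hhb x
      · simp [Set.indicator_of_notMem hx]
    · intro x
      by_cases hx : x ∈ S
      · have hpos : 0 < h x := hx
        rw [Set.indicator_of_mem hx]
        exact mul_le_of_le_one_left hpos.le (hf1 x)
      · have hle : h x ≤ 0 := not_lt.mp hx
        rw [Set.indicator_of_notMem hx]
        exact mul_nonpos_iff.mpr (Or.inl ⟨hf0 x, hle⟩)
  -- step 3
  have step3 : ∫ x, S.indicator h x ∂mu01 = ∫ x in S, h x ∂mu01 := integral_indicator hSm
  haveI : IsFiniteMeasure (mu01.restrict S) := by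
    constructor
    rw [Measure.restrict_apply_univ]
    exact lt_of_le_of_lt (measure_mono (Set.subset_univ S)) (by simp)
  have hSuniv : mu01.restrict S Set.univ ≤ 1 := by
    rw [Measure.restrict_apply_univ]
    exact le_trans (measure_mono (Set.subset_univ S)) (le_of_eq measure_univ)
  -- step 4 : swap and pull g out
  set k : ℝ → ℝ := fun y => ∫ x, W x y ∂(mu01.restrict S) with hk
  have hkm : StronglyMeasurable k :=
    ((hmeas.comp measurable_swap).stronglyMeasurable.integral_prod_right' :
      StronglyMeasurable fun y => ∫ x, W x y ∂(mu01.restrict S))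
  have hkb : ∀ y, |k y| ≤ 1 := fun y => norm_int_le_one hSuniv fun x => hbd x y
  have step4 : ∫ x in S, h x ∂mu01 = ∫ y, g y * k y ∂mu01 := by
    rw [hh]
    rw [swap_int (ν₁ := mu01.restrict S) (ν₂ := mu01)
      (hWg.aestronglyMeasurable) hWgb]
    refine integral_congr_ae (ae_of_all _ fun y => ?_)
    show ∫ x, W x y * g y ∂(mu01.restrict S) = g y * k y
    rw [integral_mul_const, mul_comm]
  set T : Set ℝ := {y | 0 < k y} with hTdef
  have hTm : MeasurableSet T := measurableSet_lt measurable_const hkm.measurable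
  -- step 5
  have step5 : ∫ y, g y * k y ∂mu01 ≤ ∫ y, T.indicator k y ∂mu01 := by
    refine integral_mono ?_ ?_ ?_
    · exact integrable_bdd ((hg.mul hkm.measurable).aestronglyMeasurable)
        (fun y => abs_mul_le_one (hgb y) (hkb y))
    · refine integrable_bdd ((hkm.measurable.indicator hTm).aestronglyMeasurable) fun y => ?_
      by_cases hy : y ∈ T
      · simpa [Set.indicator_of_mem hy] using hkb y
      · simp [Set.indicator_of_notMem hy]
    · intro y
      by_cases hy : y ∈ T
      · have hpos : 0 < k y := hy
        rw [Set.indicator_of_mem hy]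
        exact mul_le_of_le_one_left hpos.le (hg1 y)
      · have hle : k y ≤ 0 := not_lt.mp hy
        rw [Set.indicator_of_notMem hy]
        exact mul_nonpos_iff.mpr (Or.inl ⟨hg0 y, hle⟩)
  have step6 : ∫ y, T.indicator k y ∂mu01 = ∫ y in T, k y ∂mu01 := integral_indicator hTm
  haveI : IsFiniteMeasure (mu01.restrict T) := by
    constructor
    rw [Measure.restrict_apply_univ]
    exact lt_of_le_of_lt (measure_mono (Set.subset_univ T)) (by simp)
  -- step 7 : swap back and identify with the cut-norm set
  have step7 : ∫ y in T, k y ∂mu01 ≤ cutNorm W := by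
    have hswap : ∫ y, (∫ x, W x y ∂(mu01.restrict S)) ∂(mu01.restrict T)
        = ∫ x, (∫ y, W x y ∂(mu01.restrict T)) ∂(mu01.restrict S) :=
      (swap_int (ν₁ := mu01.restrict S) (ν₂ := mu01.restrict T)
        (hmeas.aestronglyMeasurable) hbd).symm
    have hres : mu01.restrict S = volume.restrict (S ∩ I01) := Measure.restrict_restrict hSm
    have hresT : mu01.restrict T = volume.restrict (T ∩ I01) := Measure.restrict_restrict hTm
    calc ∫ y in T, k y ∂mu01 = ∫ x, (∫ y, W x y ∂(mu01.restrict T)) ∂(mu01.restrict S) := hswap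
      _ = ∫ x in S ∩ I01, ∫ y in T ∩ I01, W x y := by rw [hres, hresT]
      _ ≤ |∫ x in S ∩ I01, ∫ y in T ∩ I01, W x y| := le_abs_self _
      _ ≤ cutNorm W := elem_le_cutNorm W hbd (hSm.inter measurableSet_Icc)
            (hTm.inter measurableSet_Icc) Set.inter_subset_right Set.inter_subset_right
  linarith [step1, step2, step3.le, step4.le, step5, step6.le, step7]


lemma max_sub (a : ℝ) : max a 0 - max (-a) 0 = a := by
  rcases le_total a 0 with h | h
  · rw [max_eq_right h, max_eq_left (neg_nonneg.mpr h)]; ring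
  · rw [max_eq_left h, max_eq_right (neg_nonpos.mpr h)]; ring

lemma bilinear_abs_le01 (W : ℝ → ℝ → ℝ)
    (hmeas : Measurable fun p : ℝ × ℝ => W p.1 p.2)
    (hbd : ∀ x y, |W x y| ≤ 1)
    (f g : ℝ → ℝ) (hf : Measurable f) (hg : Measurable g)
    (hf0 : ∀ x, 0 ≤ f x) (hf1 : ∀ x, f x ≤ 1)
    (hg0 : ∀ x, 0 ≤ g x) (hg1 : ∀ x, g x ≤ 1) :
    |∫ x, (∫ y, W x y * f x * g y ∂mu01) ∂mu01| ≤ cutNorm W := by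
  have hub := bilinear_le W hmeas hbd f g hf hg hf0 hf1 hg0 hg1
  have hneg := bilinear_le (fun x y => -W x y) hmeas.neg
    (fun x y => by simpa using hbd x y) f g hf hg hf0 hf1 hg0 hg1
  rw [cutNorm_neg] at hneg
  have hid : ∫ x, (∫ y, -W x y * f x * g y ∂mu01) ∂mu01
      = -∫ x, (∫ y, W x y * f x * g y ∂mu01) ∂mu01 := by
    have e : ∀ x y, -W x y * f x * g y = -(W x y * f x * g y) := fun x y => by ring
    simp_rw [e, integral_neg]
  rw [hid] at hneg
  exact abs_le.mpr ⟨by linarith, hub⟩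

lemma bilinear_abs_le (W : ℝ → ℝ → ℝ)
    (hmeas : Measurable fun p : ℝ × ℝ => W p.1 p.2)
    (hbd : ∀ x y, |W x y| ≤ 1)
    (f g : ℝ → ℝ) (hf : Measurable f) (hg : Measurable g)
    (hfb : ∀ x, |f x| ≤ 1) (hgb : ∀ x, |g x| ≤ 1) :
    |∫ x, (∫ y, W x y * f x * g y ∂mu01) ∂mu01| ≤ 4 * cutNorm W := by
  set fp : ℝ → ℝ := fun x => max (f x) 0 with hfp
  set fn : ℝ → ℝ := fun x => max (-f x) 0 with hfn
  set gp : ℝ → ℝ := fun x => max (g x) 0 with hgp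
  set gn : ℝ → ℝ := fun x => max (-g x) 0 with hgn
  have hfpm : Measurable fp := hf.max measurable_const
  have hfnm : Measurable fn := hf.neg.max measurable_const
  have hgpm : Measurable gp := hg.max measurable_const
  have hgnm : Measurable gn := hg.neg.max measurable_const
  have hfp0 : ∀ x, 0 ≤ fp x := fun x => le_max_right _ _
  have hfn0 : ∀ x, 0 ≤ fn x := fun x => le_max_right _ _
  have hgp0 : ∀ x, 0 ≤ gp x := fun x => le_max_right _ _
  have hgn0 : ∀ x, 0 ≤ gn x := fun x => le_max_right _ _
  have hfp1 : ∀ x, fp x ≤ 1 := fun x => max_le (abs_le.mp (hfb x)).2 zero_le_one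
  have hfn1 : ∀ x, fn x ≤ 1 := fun x => max_le (by linarith [(abs_le.mp (hfb x)).1]) zero_le_one
  have hgp1 : ∀ x, gp x ≤ 1 := fun x => max_le (abs_le.mp (hgb x)).2 zero_le_one
  have hgn1 : ∀ x, gn x ≤ 1 := fun x => max_le (by linarith [(abs_le.mp (hgb x)).1]) zero_le_one
  have hfpb : ∀ x, |fp x| ≤ 1 := fun x => abs_le.mpr ⟨by linarith [hfp0 x], hfp1 x⟩
  have hfnb : ∀ x, |fn x| ≤ 1 := fun x => abs_le.mpr ⟨by linarith [hfn0 x], hfn1 x⟩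
  have hgpb : ∀ x, |gp x| ≤ 1 := fun x => abs_le.mpr ⟨by linarith [hgp0 x], hgp1 x⟩
  have hgnb : ∀ x, |gn x| ≤ 1 := fun x => abs_le.mpr ⟨by linarith [hgn0 x], hgn1 x⟩
  -- integrability of inner integrands
  have hint : ∀ (x : ℝ) (f' g' : ℝ → ℝ), Measurable g' → (∀ z, |f' z| ≤ 1) → (∀ z, |g' z| ≤ 1) →
      Integrable (fun y => W x y * f' x * g' y) mu01 := by
    intro x f' g' hg' hf'b hg'b
    refine integrable_bdd ?_ fun y => abs_mul_le_one (abs_mul_le_one (hbd x y) (hf'b x)) (hg'b y)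
    exact (((hmeas.comp (measurable_prodMk_left)).mul_const (f' x)).mul hg').aestronglyMeasurable
  have inner_eq : ∀ x, (∫ y, W x y * f x * g y ∂mu01)
      = (∫ y, W x y * fp x * gp y ∂mu01) - (∫ y, W x y * fp x * gn y ∂mu01)
        - (∫ y, W x y * fn x * gp y ∂mu01) + (∫ y, W x y * fn x * gn y ∂mu01) := by
    intro x
    have e : ∀ y, W x y * f x * g y
        = W x y * fp x * gp y - W x y * fp x * gn y - W x y * fn x * gp y + W x y * fn x * gn y := by
      intro y
      have h1 : f x = fp x - fn x := (max_sub (f x)).symm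
      have h2 : g y = gp y - gn y := (max_sub (g y)).symm
      rw [h1, h2]; ring
    calc (∫ y, W x y * f x * g y ∂mu01)
        = ∫ y, (W x y * fp x * gp y - W x y * fp x * gn y
            - W x y * fn x * gp y + W x y * fn x * gn y) ∂mu01 :=
          integral_congr_ae (ae_of_all _ e)
      _ = (∫ y, W x y * fp x * gp y ∂mu01) - (∫ y, W x y * fp x * gn y ∂mu01)
            - (∫ y, W x y * fn x * gp y ∂mu01) + (∫ y, W x y * fn x * gn y ∂mu01) := by
          have h12 : Integrable (fun y => W x y * fp x * gp y - W x y * fp x * gn y) mu01 :=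
            (hint x fp gp hgpm hfpb hgpb).sub (hint x fp gn hgnm hfpb hgnb)
          have h123 : Integrable (fun y =>
              W x y * fp x * gp y - W x y * fp x * gn y - W x y * fn x * gp y) mu01 :=
            h12.sub (hint x fn gp hgpm hfnb hgpb)
          rw [integral_add h123 (hint x fn gn hgnm hfnb hgnb),
              integral_sub h12 (hint x fn gp hgpm hfnb hgpb),
              integral_sub (hint x fp gp hgpm hfpb hgpb) (hint x fp gn hgnm hfpb hgnb)]
  have intA : ∀ (f' g' : ℝ → ℝ), Measurable f' → Measurable g' →
      (∀ z, |f' z| ≤ 1) → (∀ z, |g' z| ≤ 1) →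
      Integrable (fun x => ∫ y, W x y * f' x * g' y ∂mu01) mu01 := by
    intro f' g' hf' hg' hf'b hg'b
    refine integrable_bdd ?_
      (fun x => norm_int_le_one measure_univ.le fun y =>
        abs_mul_le_one (abs_mul_le_one (hbd x y) (hf'b x)) (hg'b y))
    exact (((hmeas.mul (hf'.comp measurable_fst)).mul
      (hg'.comp measurable_snd)).stronglyMeasurable.integral_prod_right').aestronglyMeasurable
  have houter : ∫ x, (∫ y, W x y * f x * g y ∂mu01) ∂mu01
      = (∫ x, (∫ y, W x y * fp x * gp y ∂mu01) ∂mu01)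
        - (∫ x, (∫ y, W x y * fp x * gn y ∂mu01) ∂mu01)
        - (∫ x, (∫ y, W x y * fn x * gp y ∂mu01) ∂mu01)
        + (∫ x, (∫ y, W x y * fn x * gn y ∂mu01) ∂mu01) := by
    calc ∫ x, (∫ y, W x y * f x * g y ∂mu01) ∂mu01
        = ∫ x, ((∫ y, W x y * fp x * gp y ∂mu01) - (∫ y, W x y * fp x * gn y ∂mu01)
            - (∫ y, W x y * fn x * gp y ∂mu01) + (∫ y, W x y * fn x * gn y ∂mu01)) ∂mu01 :=
          integral_congr_ae (ae_of_all _ inner_eq)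
      _ = _ := by
          have h12 : Integrable (fun x => (∫ y, W x y * fp x * gp y ∂mu01)
              - (∫ y, W x y * fp x * gn y ∂mu01)) mu01 :=
            (intA fp gp hfpm hgpm hfpb hgpb).sub (intA fp gn hfpm hgnm hfpb hgnb)
          have h123 : Integrable (fun x => (∫ y, W x y * fp x * gp y ∂mu01)
              - (∫ y, W x y * fp x * gn y ∂mu01) - (∫ y, W x y * fn x * gp y ∂mu01)) mu01 :=
            h12.sub (intA fn gp hfnm hgpm hfnb hgpb)
          rw [integral_add h123 (intA fn gn hfnm hgnm hfnb hgnb),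
              integral_sub h12 (intA fn gp hfnm hgpm hfnb hgpb),
              integral_sub (intA fp gp hfpm hgpm hfpb hgpb) (intA fp gn hfpm hgnm hfpb hgnb)]
  have K1 := bilinear_abs_le01 W hmeas hbd fp gp hfpm hgpm hfp0 hfp1 hgp0 hgp1
  have K2 := bilinear_abs_le01 W hmeas hbd fp gn hfpm hgnm hfp0 hfp1 hgn0 hgn1
  have K3 := bilinear_abs_le01 W hmeas hbd fn gp hfnm hgpm hfn0 hfn1 hgp0 hgp1
  have K4 := bilinear_abs_le01 W hmeas hbd fn gn hfnm hgnm hfn0 hfn1 hgn0 hgn1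
  rw [houter]
  have a1 := abs_le.mp K1
  have a2 := abs_le.mp K2
  have a3 := abs_le.mp K3
  have a4 := abs_le.mp K4
  exact abs_le.mpr ⟨by linarith, by linarith⟩

end C4Aux

open C4Aux

theorem cutNorm_ge_quarter_c4_density (W : ℝ → ℝ → ℝ)
    (hmeas : Measurable fun p : ℝ × ℝ => W p.1 p.2)
    (hsym : ∀ x y, W x y = W y x)
    (hbd : ∀ x y, W x y ∈ Set.Icc (-1 : ℝ) 1) :
    (1 / 4) * (∫ x1 in I01, ∫ x2 in I01, ∫ x3 in I01, ∫ x4 in I01,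
        W x1 x2 * W x2 x3 * W x3 x4 * W x4 x1) ≤ cutNorm W := by
  have habs : ∀ x y, |W x y| ≤ 1 := fun x y => abs_le.mpr ⟨(hbd x y).1, (hbd x y).2⟩
  set U : ℝ → ℝ → ℝ := fun y z => ∫ w, W y w * W w z ∂mu01 with hU
  have hUF : Measurable fun q : (ℝ × ℝ) × ℝ => W q.1.1 q.2 * W q.2 q.1.2 :=
    (hmeas.comp (measurable_fst.fst.prodMk measurable_snd)).mul
      (hmeas.comp (measurable_snd.prodMk measurable_fst.snd))
  have hUsm : StronglyMeasurable fun p : ℝ × ℝ => U p.1 p.2 :=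
    hUF.stronglyMeasurable.integral_prod_right'
  have hUm : Measurable fun p : ℝ × ℝ => U p.1 p.2 := hUsm.measurable
  have hUb : ∀ y z, |U y z| ≤ 1 := fun y z =>
    norm_int_le_one measure_univ.le fun w => abs_mul_le_one (habs y w) (habs w z)
  -- Step A: integrate out x4
  have stepA : (∫ x1 in I01, ∫ x2 in I01, ∫ x3 in I01, ∫ x4 in I01,
        W x1 x2 * W x2 x3 * W x3 x4 * W x4 x1)
      = ∫ x1, (∫ x2, (∫ x3, (W x1 x2 * W x2 x3) * U x3 x1 ∂mu01) ∂mu01) ∂mu01 := by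
    refine integral_congr_ae (ae_of_all _ fun x1 => ?_)
    refine integral_congr_ae (ae_of_all _ fun x2 => ?_)
    refine integral_congr_ae (ae_of_all _ fun x3 => ?_)
    show ∫ x4, W x1 x2 * W x2 x3 * W x3 x4 * W x4 x1 ∂mu01 = (W x1 x2 * W x2 x3) * U x3 x1
    have e : ∀ x4, W x1 x2 * W x2 x3 * W x3 x4 * W x4 x1
        = (W x1 x2 * W x2 x3) * (W x3 x4 * W x4 x1) := fun _ => by ring
    simp_rw [e]
    rw [integral_const_mul]
  -- Step B: swap x2 and x3
  have stepB : ∀ x1, ∫ x2, (∫ x3, (W x1 x2 * W x2 x3) * U x3 x1 ∂mu01) ∂mu01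
      = ∫ x3, (∫ x2, (W x1 x2 * W x2 x3) * U x3 x1 ∂mu01) ∂mu01 := by
    intro x1
    refine swap_int ?_ fun x2 x3 =>
      abs_mul_le_one (abs_mul_le_one (habs x1 x2) (habs x2 x3)) (hUb x3 x1)
    exact (((hmeas.comp ((measurable_const (a := x1)).prodMk measurable_fst)).mul hmeas).mul
      (hUm.comp (measurable_snd.prodMk measurable_const))).aestronglyMeasurable
  -- Step C: swap x1 and x3
  have hinnerm : StronglyMeasurable fun p : ℝ × ℝ =>
      ∫ x2, (W p.1 x2 * W x2 p.2) * U p.2 p.1 ∂mu01 := by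
    have : Measurable fun q : (ℝ × ℝ) × ℝ => (W q.1.1 q.2 * W q.2 q.1.2) * U q.1.2 q.1.1 :=
      hUF.mul (hUm.comp (measurable_fst.snd.prodMk measurable_fst.fst))
    exact this.stronglyMeasurable.integral_prod_right'
  have stepC : ∫ x1, (∫ x3, (∫ x2, (W x1 x2 * W x2 x3) * U x3 x1 ∂mu01) ∂mu01) ∂mu01
      = ∫ x3, (∫ x1, (∫ x2, (W x1 x2 * W x2 x3) * U x3 x1 ∂mu01) ∂mu01) ∂mu01 := by
    refine swap_int hinnerm.aestronglyMeasurable fun x1 x3 =>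
      norm_int_le_one measure_univ.le fun x2 =>
        abs_mul_le_one (abs_mul_le_one (habs x1 x2) (habs x2 x3)) (hUb x3 x1)
  -- Step D: for each x3, the inner double integral is a bilinear form
  have stepD : ∀ x3, |∫ x1, (∫ x2, (W x1 x2 * W x2 x3) * U x3 x1 ∂mu01) ∂mu01|
      ≤ 4 * cutNorm W := by
    intro x3
    have e : ∫ x1, (∫ x2, (W x1 x2 * W x2 x3) * U x3 x1 ∂mu01) ∂mu01
        = ∫ x1, (∫ x2, W x1 x2 * U x3 x1 * W x2 x3 ∂mu01) ∂mu01 := by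
      refine integral_congr_ae (ae_of_all _ fun x1 => ?_)
      refine integral_congr_ae (ae_of_all _ fun x2 => ?_)
      show (W x1 x2 * W x2 x3) * U x3 x1 = W x1 x2 * U x3 x1 * W x2 x3
      ring
    rw [e]
    exact bilinear_abs_le W hmeas habs (fun x1 => U x3 x1) (fun x2 => W x2 x3)
      (hUm.comp (measurable_const.prodMk measurable_id))
      (hmeas.comp (measurable_id.prodMk measurable_const))
      (fun x1 => hUb x3 x1) (fun x2 => habs x2 x3)
  -- Conclusion
  have hT : (∫ x1 in I01, ∫ x2 in I01, ∫ x3 in I01, ∫ x4 in I01,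
        W x1 x2 * W x2 x3 * W x3 x4 * W x4 x1) ≤ 4 * cutNorm W := by
    rw [stepA]
    rw [integral_congr_ae (ae_of_all _ stepB), stepC]
    refine le_trans (le_abs_self _) ?_
    have h := norm_integral_le_of_norm_le_const (μ := mu01) (C := 4 * cutNorm W)
      (f := fun x3 => ∫ x1, (∫ x2, (W x1 x2 * W x2 x3) * U x3 x1 ∂mu01) ∂mu01)
      (ae_of_all _ fun x3 => by simpa using stepD x3)
    simpa using h
  have h0 : 0 ≤ cutNorm W := cutNorm_nonneg W habs
  linarith
end
end

section
/- Let W : [0,1]^2 → [-1,1] be a symmetric measurable kernel and f : [0,1] → [0,1] measurable. Then (∫∫∫ f(y) f(z) W(x,y) W(x,z) dx dy dz)^2 ≤ t*(C4,W), where t*(C4,W) = ∫_{[0,1]^4} W(x1,x2)W(x2,x3)W(x3,x4)W(x4,x1) dx. -/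
open MeasureTheory

noncomputable section

namespace SCS

abbrev μ01 : Measure ℝ := volume.restrict I01

lemma μ01_univ : μ01 Set.univ = 1 := by
  simp [μ01, I01, Measure.restrict_apply, Real.volume_Icc]

instance : IsProbabilityMeasure μ01 := ⟨μ01_univ⟩

/-- Integrability of bounded a.e.-strongly-measurable functions on a probability space. -/
lemma integrable_of_bound {α : Type*} [MeasurableSpace α] (ν : Measure α) [IsFiniteMeasure ν]
    (F : α → ℝ) (hm : AEStronglyMeasurable F ν) (C : ℝ) (hC : ∀ x, |F x| ≤ C) :
    Integrable F ν :=
  Integrable.mono' (integrable_const C) hm (Filter.Eventually.of_forall fun x => by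
    simpa [Real.norm_eq_abs] using hC x)

lemma abs_integral_le_of_bound {α : Type*} [MeasurableSpace α] (ν : Measure α)
    [IsProbabilityMeasure ν] (F : α → ℝ) (C : ℝ) (hC : ∀ x, |F x| ≤ C) :
    |∫ x, F x ∂ν| ≤ C := by
  have := norm_integral_le_of_norm_le_const (μ := ν) (f := F) (C := C)
    (Filter.Eventually.of_forall fun x => by simpa [Real.norm_eq_abs] using hC x)
  simpa [Real.norm_eq_abs] using this

/-- Cauchy–Schwarz for bounded measurable functions on a finite measure. -/
lemma cauchy_schwarz {α : Type*} [MeasurableSpace α] (ν : Measure α) [IsFiniteMeasure ν]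
    (a b : α → ℝ) (ha : Measurable a) (hb : Measurable b)
    (Ca Cb : ℝ) (hCa : ∀ x, |a x| ≤ Ca) (hCb : ∀ x, |b x| ≤ Cb) :
    (∫ x, a x * b x ∂ν) ^ 2 ≤ (∫ x, a x ^ 2 ∂ν) * (∫ x, b x ^ 2 ∂ν) := by
  have hpq : (2 : ℝ).HolderConjugate 2 := Real.holderConjugate_iff.mpr ⟨one_lt_two, by norm_num⟩
  have hma : MemLp a (ENNReal.ofReal 2) ν := by
    refine MemLp.mono_exponent (q := ⊤) ?_ le_top
    exact memLp_top_of_bound ha.aestronglyMeasurable Ca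
      (Filter.Eventually.of_forall fun x => by simpa [Real.norm_eq_abs] using hCa x)
  have hmb : MemLp b (ENNReal.ofReal 2) ν := by
    refine MemLp.mono_exponent (q := ⊤) ?_ le_top
    exact memLp_top_of_bound hb.aestronglyMeasurable Cb
      (Filter.Eventually.of_forall fun x => by simpa [Real.norm_eq_abs] using hCb x)
  have h := integral_mul_norm_le_Lp_mul_Lq hpq hma hmb
  have hA : ∫ x, ‖a x‖ ^ (2 : ℝ) ∂ν = ∫ x, a x ^ 2 ∂ν := by
    refine integral_congr_ae (Filter.Eventually.of_forall fun x => ?_)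
    show ‖_‖ ^ (2:ℝ) = _
    rw [Real.rpow_two]
    simp [Real.norm_eq_abs, sq_abs]
  have hB : ∫ x, ‖b x‖ ^ (2 : ℝ) ∂ν = ∫ x, b x ^ 2 ∂ν := by
    refine integral_congr_ae (Filter.Eventually.of_forall fun x => ?_)
    show ‖_‖ ^ (2:ℝ) = _
    rw [Real.rpow_two]
    simp [Real.norm_eq_abs, sq_abs]
  rw [hA, hB] at h
  have hAnn : 0 ≤ ∫ x, a x ^ 2 ∂ν := integral_nonneg fun x => sq_nonneg _
  have hBnn : 0 ≤ ∫ x, b x ^ 2 ∂ν := integral_nonneg fun x => sq_nonneg _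
  have h1 : |∫ x, a x * b x ∂ν| ≤ ∫ x, ‖a x‖ * ‖b x‖ ∂ν := by
    calc |∫ x, a x * b x ∂ν| ≤ ∫ x, ‖a x * b x‖ ∂ν := by
          simpa [Real.norm_eq_abs] using norm_integral_le_integral_norm (fun x => a x * b x) (μ := ν)
      _ = ∫ x, ‖a x‖ * ‖b x‖ ∂ν := by
          refine integral_congr_ae (Filter.Eventually.of_forall fun x => ?_)
          simp [Real.norm_eq_abs, abs_mul]
  have h2 : |∫ x, a x * b x ∂ν| ≤
      (∫ x, a x ^ 2 ∂ν) ^ ((1:ℝ)/2) * (∫ x, b x ^ 2 ∂ν) ^ ((1:ℝ)/2) := h1.trans (by simpa using h)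
  have hsq : ((∫ x, a x ^ 2 ∂ν) ^ ((1:ℝ)/2) * (∫ x, b x ^ 2 ∂ν) ^ ((1:ℝ)/2)) ^ 2 =
      (∫ x, a x ^ 2 ∂ν) * (∫ x, b x ^ 2 ∂ν) := by
    rw [mul_pow, ← Real.rpow_natCast ((∫ x, a x ^ 2 ∂ν) ^ ((1:ℝ)/2)) 2,
      ← Real.rpow_natCast ((∫ x, b x ^ 2 ∂ν) ^ ((1:ℝ)/2)) 2,
      ← Real.rpow_mul hAnn, ← Real.rpow_mul hBnn]
    norm_num
  calc (∫ x, a x * b x ∂ν) ^ 2 = |∫ x, a x * b x ∂ν| ^ 2 := (sq_abs _).symm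
    _ ≤ ((∫ x, a x ^ 2 ∂ν) ^ ((1:ℝ)/2) * (∫ x, b x ^ 2 ∂ν) ^ ((1:ℝ)/2)) ^ 2 :=
        pow_le_pow_left₀ (abs_nonneg _) h2 2
    _ = _ := hsq

lemma abs_mul_le_one {a b : ℝ} (ha : |a| ≤ 1) (hb : |b| ≤ 1) : |a * b| ≤ 1 := by
  rw [abs_mul]; nlinarith [abs_nonneg a, abs_nonneg b]

lemma swap_integral (F : ℝ → ℝ → ℝ) (hm : Measurable fun p : ℝ × ℝ => F p.1 p.2)
    (hC : ∀ a b, |F a b| ≤ 1) :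
    ∫ a, ∫ b, F a b ∂μ01 ∂μ01 = ∫ b, ∫ a, F a b ∂μ01 ∂μ01 := by
  refine integral_integral_swap ?_
  have : Function.uncurry F = fun p : ℝ × ℝ => F p.1 p.2 := rfl
  rw [this]
  exact integrable_of_bound _ _ hm.aestronglyMeasurable 1 (fun p => hC p.1 p.2)

end SCS

theorem second_cauchy_schwarz_step (W : ℝ → ℝ → ℝ)
    (hmeas : Measurable fun p : ℝ × ℝ => W p.1 p.2)
    (hsym : ∀ x y, W x y = W y x)
    (hbd : ∀ x y, W x y ∈ Set.Icc (-1 : ℝ) 1)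
    (f : ℝ → ℝ) (hf : Measurable f) (hfb : ∀ x, f x ∈ Set.Icc (0 : ℝ) 1) :
    (∫ x in I01, ∫ y in I01, ∫ z in I01, f y * f z * W x y * W x z) ^ 2 ≤
      ∫ x1 in I01, ∫ x2 in I01, ∫ x3 in I01, ∫ x4 in I01,
        W x1 x2 * W x2 x3 * W x3 x4 * W x4 x1 := by
  classical
  have hWb : ∀ x y, |W x y| ≤ 1 := fun x y => abs_le.2 ⟨(hbd x y).1, (hbd x y).2⟩
  have hfb1 : ∀ x, |f x| ≤ 1 := fun x => abs_le.2 ⟨le_trans (by norm_num) (hfb x).1, (hfb x).2⟩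
  set g : ℝ → ℝ → ℝ := fun a b => ∫ x, W x a * W x b ∂SCS.μ01 with hgdef
  have hgm : Measurable fun p : ℝ × ℝ => g p.1 p.2 := by
    have h1 : Measurable fun q : (ℝ × ℝ) × ℝ => W q.2 q.1.1 * W q.2 q.1.2 :=
      (hmeas.comp (measurable_snd.prodMk (measurable_fst.comp measurable_fst))).mul
        (hmeas.comp (measurable_snd.prodMk (measurable_snd.comp measurable_fst)))
    exact h1.stronglyMeasurable.integral_prod_right'.measurable
  have hgb : ∀ a b, |g a b| ≤ 1 := fun a b =>
    SCS.abs_integral_le_of_bound _ _ 1 (fun x => SCS.abs_mul_le_one (hWb x a) (hWb x b))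
  have hgsym : ∀ a b, g a b = g b a := fun a b =>
    integral_congr_ae (Filter.Eventually.of_forall fun x => mul_comm _ _)
  set k : ℝ → ℝ := fun x => ∫ z, f z * W x z ∂SCS.μ01 with hkdef
  have hkm : Measurable k := by
    have h1 : Measurable fun q : ℝ × ℝ => f q.2 * W q.1 q.2 := (hf.comp measurable_snd).mul hmeas
    exact h1.stronglyMeasurable.integral_prod_right'.measurable
  have hkb : ∀ x, |k x| ≤ 1 := fun x =>
    SCS.abs_integral_le_of_bound _ _ 1 (fun z => SCS.abs_mul_le_one (hfb1 z) (hWb x z))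
  set q : ℝ → ℝ := fun y => ∫ z, f z * g y z ∂SCS.μ01 with hqdef
  have hqm : Measurable q := by
    have h1 : Measurable fun p : ℝ × ℝ => f p.2 * g p.1 p.2 := (hf.comp measurable_snd).mul hgm
    exact h1.stronglyMeasurable.integral_prod_right'.measurable
  have hqb : ∀ y, |q y| ≤ 1 := fun y =>
    SCS.abs_integral_le_of_bound _ _ 1 (fun z => SCS.abs_mul_le_one (hfb1 z) (hgb y z))
  -- Step 1: the LHS inner integral equals ∫ y, f y * q y
  have e1 : (∫ x in I01, ∫ y in I01, ∫ z in I01, f y * f z * W x y * W x z) =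
      ∫ y, f y * q y ∂SCS.μ01 := by
    have e1a : ∀ x, (∫ y in I01, ∫ z in I01, f y * f z * W x y * W x z) = k x * k x := by
      intro x
      have inner : ∀ y, (∫ z in I01, f y * f z * W x y * W x z) = (f y * W x y) * k x := by
        intro y
        rw [show (fun z => f y * f z * W x y * W x z) = fun z => (f y * W x y) * (f z * W x z)
          from funext fun z => by ring]
        exact integral_const_mul _ _
      rw [show (fun y => ∫ z in I01, f y * f z * W x y * W x z)
          = fun y => (f y * W x y) * k x from funext inner]
      rw [integral_mul_const]
    calc (∫ x in I01, ∫ y in I01, ∫ z in I01, f y * f z * W x y * W x z)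
        = ∫ x, k x * k x ∂SCS.μ01 := integral_congr_ae (Filter.Eventually.of_forall e1a)
      _ = ∫ x, ∫ y, (f y * W x y) * k x ∂SCS.μ01 ∂SCS.μ01 := by
          refine integral_congr_ae (Filter.Eventually.of_forall fun x => ?_)
          beta_reduce
          rw [integral_mul_const]
      _ = ∫ y, ∫ x, (f y * W x y) * k x ∂SCS.μ01 ∂SCS.μ01 := by
          refine SCS.swap_integral _ ?_ ?_
          · exact (((hf.comp measurable_snd).mul hmeas).mul (hkm.comp measurable_fst))
          · exact fun a b => SCS.abs_mul_le_one (SCS.abs_mul_le_one (hfb1 b) (hWb a b)) (hkb a)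
      _ = ∫ y, f y * q y ∂SCS.μ01 := by
          refine integral_congr_ae (Filter.Eventually.of_forall fun y => ?_)
          beta_reduce
          have h2 : ∫ x, (f y * W x y) * k x ∂SCS.μ01 = f y * ∫ x, W x y * k x ∂SCS.μ01 := by
            rw [← integral_const_mul]
            exact integral_congr_ae (Filter.Eventually.of_forall fun x => by ring)
          rw [h2]
          congr 1
          calc ∫ x, W x y * k x ∂SCS.μ01
              = ∫ x, ∫ z, W x y * (f z * W x z) ∂SCS.μ01 ∂SCS.μ01 := by
                refine integral_congr_ae (Filter.Eventually.of_forall fun x => ?_)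
                beta_reduce
                rw [integral_const_mul]
            _ = ∫ z, ∫ x, W x y * (f z * W x z) ∂SCS.μ01 ∂SCS.μ01 := by
                refine SCS.swap_integral _ ?_ ?_
                · exact (hmeas.comp (measurable_fst.prodMk measurable_const)).mul
                    ((hf.comp measurable_snd).mul hmeas)
                · exact fun a b => SCS.abs_mul_le_one (hWb a y)
                    (SCS.abs_mul_le_one (hfb1 b) (hWb a b))
            _ = q y := by
                refine integral_congr_ae (Filter.Eventually.of_forall fun z => ?_)
                beta_reduce
                rw [show (fun x => W x y * (f z * W x z)) = fun x => f z * (W x y * W x z)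
                  from funext fun x => by ring]
                rw [integral_const_mul]
  -- Step 2: Cauchy-Schwarz twice
  have hf2 : ∫ y, f y ^ 2 ∂SCS.μ01 ≤ 1 := by
    refine le_trans (le_abs_self _) (SCS.abs_integral_le_of_bound _ _ 1 fun y => ?_)
    rw [abs_pow]
    exact pow_le_one₀ (abs_nonneg _) (hfb1 y)
  have e2 : (∫ y, f y * q y ∂SCS.μ01) ^ 2 ≤ ∫ y, ∫ z, g y z ^ 2 ∂SCS.μ01 ∂SCS.μ01 := by
    have c1 := SCS.cauchy_schwarz SCS.μ01 f q hf hqm 1 1 hfb1 hqb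
    have hq2nn : 0 ≤ ∫ y, q y ^ 2 ∂SCS.μ01 := integral_nonneg fun y => sq_nonneg _
    have step1 : (∫ y, f y * q y ∂SCS.μ01) ^ 2 ≤ ∫ y, q y ^ 2 ∂SCS.μ01 := by
      calc (∫ y, f y * q y ∂SCS.μ01) ^ 2
          ≤ (∫ y, f y ^ 2 ∂SCS.μ01) * (∫ y, q y ^ 2 ∂SCS.μ01) := c1
        _ ≤ 1 * (∫ y, q y ^ 2 ∂SCS.μ01) := mul_le_mul_of_nonneg_right hf2 hq2nn
        _ = _ := one_mul _
    refine step1.trans (integral_mono ?_ ?_ ?_)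
    · exact SCS.integrable_of_bound _ _ (hqm.pow_const 2).aestronglyMeasurable 1
        (fun y => by rw [abs_pow]; exact pow_le_one₀ (abs_nonneg _) (hqb y))
    · have hm2 : Measurable fun y => ∫ z, g y z ^ 2 ∂SCS.μ01 := by
        have h1 : Measurable fun p : ℝ × ℝ => g p.1 p.2 ^ 2 := hgm.pow_const 2
        exact h1.stronglyMeasurable.integral_prod_right'.measurable
      exact SCS.integrable_of_bound _ _ hm2.aestronglyMeasurable 1
        (fun y => SCS.abs_integral_le_of_bound _ _ 1 fun z => by
          rw [abs_pow]; exact pow_le_one₀ (abs_nonneg _) (hgb y z))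
    · intro y
      have c2 := SCS.cauchy_schwarz SCS.μ01 f (fun z => g y z) hf
        (hgm.comp (measurable_const.prodMk measurable_id)) 1 1 hfb1 (fun z => hgb y z)
      have hgynn : 0 ≤ ∫ z, g y z ^ 2 ∂SCS.μ01 := integral_nonneg fun z => sq_nonneg _
      calc q y ^ 2 = (∫ z, f z * g y z ∂SCS.μ01) ^ 2 := rfl
        _ ≤ (∫ z, f z ^ 2 ∂SCS.μ01) * (∫ z, g y z ^ 2 ∂SCS.μ01) := c2
        _ ≤ 1 * (∫ z, g y z ^ 2 ∂SCS.μ01) := mul_le_mul_of_nonneg_right hf2 hgynn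
        _ = _ := one_mul _
  -- Step 3: the RHS equals ∫∫ g^2
  have e3 : (∫ x1 in I01, ∫ x2 in I01, ∫ x3 in I01, ∫ x4 in I01,
      W x1 x2 * W x2 x3 * W x3 x4 * W x4 x1)
      = ∫ y, ∫ z, g y z ^ 2 ∂SCS.μ01 ∂SCS.μ01 := by
    refine integral_congr_ae (Filter.Eventually.of_forall fun x1 => ?_)
    have inner4 : ∀ x2 x3, (∫ x4 in I01, W x1 x2 * W x2 x3 * W x3 x4 * W x4 x1)
        = (W x1 x2 * W x2 x3) * g x3 x1 := by
      intro x2 x3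
      rw [show (fun x4 => W x1 x2 * W x2 x3 * W x3 x4 * W x4 x1)
          = fun x4 => (W x1 x2 * W x2 x3) * (W x4 x3 * W x4 x1)
        from funext fun x4 => by rw [hsym x3 x4]; ring]
      exact integral_const_mul _ _
    calc (∫ x2 in I01, ∫ x3 in I01, ∫ x4 in I01, W x1 x2 * W x2 x3 * W x3 x4 * W x4 x1)
        = ∫ x2, ∫ x3, (W x1 x2 * W x2 x3) * g x3 x1 ∂SCS.μ01 ∂SCS.μ01 := by
          refine integral_congr_ae (Filter.Eventually.of_forall fun x2 => ?_)
          exact integral_congr_ae (Filter.Eventually.of_forall fun x3 => inner4 x2 x3)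
      _ = ∫ x3, ∫ x2, (W x1 x2 * W x2 x3) * g x3 x1 ∂SCS.μ01 ∂SCS.μ01 := by
          refine SCS.swap_integral _ ?_ ?_
          · exact ((hmeas.comp (measurable_const.prodMk measurable_fst)).mul hmeas).mul
              (hgm.comp (measurable_snd.prodMk measurable_const))
          · exact fun a b => SCS.abs_mul_le_one
              (SCS.abs_mul_le_one (hWb x1 a) (hWb a b)) (hgb b x1)
      _ = ∫ x3, g x1 x3 ^ 2 ∂SCS.μ01 := by
          refine integral_congr_ae (Filter.Eventually.of_forall fun x3 => ?_)
          beta_reduce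
          rw [show (fun x2 => (W x1 x2 * W x2 x3) * g x3 x1)
              = fun x2 => (W x2 x1 * W x2 x3) * g x3 x1
            from funext fun x2 => by rw [hsym x1 x2]]
          rw [integral_mul_const]
          show g x1 x3 * g x3 x1 = g x1 x3 ^ 2
          rw [hgsym x3 x1]; ring
  rw [e1, e3]
  exact e2
end
end

section
/- Let U, W : [0,1]^2 → [0,1] be graphons and q ≥ 1. Then the total variation distance between the distributions of the sampled random graphs satisfies d_tv(μ(q,W), μ(q,U)) ≤ (2^{q²}·q²/4)·‖U − W‖_□, where μ(q,W) is the law of 𝔾(q,W) on graphs with vertex set [q]. -/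
open MeasureTheory
open scoped Classical

noncomputable section

/-- Labelled graphs on `[q]`, encoded as Boolean functions on ordered pairs `i < j`. -/
abbrev LabGraph (q : ℕ) := {p : Fin q × Fin q // p.1 < p.2} → Bool

/-- The probability that `𝔾(q,W)` equals the labelled graph `H`. -/
def sampleLaw (q : ℕ) (W : ℝ → ℝ → ℝ) (H : LabGraph q) : ℝ :=
  ∫ x : Fin q → ℝ,
    (∏ p : {p : Fin q × Fin q // p.1 < p.2},
      (if H p then W (x p.1.1) (x p.1.2) else 1 - W (x p.1.1) (x p.1.2)))
    ∂(Measure.pi fun _ => volume.restrict I01)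

namespace TVAux

def μ : Measure ℝ := volume.restrict I01

instance : IsProbabilityMeasure μ := by
  constructor
  rw [μ, Measure.restrict_apply MeasurableSet.univ, Set.univ_inter, I01, Real.volume_Icc]
  norm_num

lemma integrable_of_bdd {α : Type*} [MeasurableSpace α] {ρ : Measure α} [IsFiniteMeasure ρ]
    {h : α → ℝ} (hm : AEStronglyMeasurable h ρ) {C : ℝ} (hb : ∀ x, |h x| ≤ C) :
    Integrable h ρ :=
  Integrable.mono' (integrable_const C) hm (ae_of_all _ (by simpa [Real.norm_eq_abs] using hb))

lemma cutSet_bddAbove {D : ℝ → ℝ → ℝ} (hDbd : ∀ x y, |D x y| ≤ 2) :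
    BddAbove {c : ℝ | ∃ S T : Set ℝ, MeasurableSet S ∧ MeasurableSet T ∧
      S ⊆ I01 ∧ T ⊆ I01 ∧ c = |∫ x in S, ∫ y in T, D x y|} := by
  refine ⟨2, ?_⟩
  rintro c ⟨S, T, hSm, hTm, hS, hT, rfl⟩
  have hSvol : volume S < ⊤ := lt_of_le_of_lt (measure_mono hS) (by rw [I01, Real.volume_Icc]; norm_num)
  have hTvol : volume T < ⊤ := lt_of_le_of_lt (measure_mono hT) (by rw [I01, Real.volume_Icc]; norm_num)
  have hS1 : (volume S).toReal ≤ 1 := by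
    have := measure_mono hS (μ := volume)
    rw [I01, Real.volume_Icc] at this
    have := ENNReal.toReal_mono (by norm_num) this
    simpa using this
  have hT1 : (volume T).toReal ≤ 1 := by
    have := measure_mono hT (μ := volume)
    rw [I01, Real.volume_Icc] at this
    have := ENNReal.toReal_mono (by norm_num) this
    simpa using this
  have inner : ∀ x, ‖∫ y in T, D x y‖ ≤ 2 := by
    intro x
    calc ‖∫ y in T, D x y‖ ≤ 2 * (volume T).toReal := by
          refine norm_setIntegral_le_of_norm_le_const hTvol (fun y _ => ?_)
          simpa [Real.norm_eq_abs] using hDbd x y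
      _ ≤ 2 := by nlinarith
  have : ‖∫ x in S, ∫ y in T, D x y‖ ≤ 2 * (volume S).toReal :=
    norm_setIntegral_le_of_norm_le_const hSvol (fun x _ => inner x)
  rw [Real.norm_eq_abs] at this
  nlinarith

lemma cutNorm_nonneg {D : ℝ → ℝ → ℝ} (hDbd : ∀ x y, |D x y| ≤ 2) : 0 ≤ cutNorm D := by
  refine le_csSup (cutSet_bddAbove hDbd) ?_
  exact ⟨∅, ∅, MeasurableSet.empty, MeasurableSet.empty, by simp [I01], by simp [I01], by simp⟩

/-- Smoothing step: replace a `[0,1]`-valued weight by an indicator. -/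
lemma stepA {φ : ℝ → ℝ} (hφm : Measurable φ) (hφi : Integrable φ μ) {f : ℝ → ℝ}
    (hf : Measurable f) (hf0 : ∀ x, 0 ≤ f x) (hf1 : ∀ x, f x ≤ 1) :
    ∃ S : Set ℝ, MeasurableSet S ∧ |∫ x, f x * φ x ∂μ| ≤ |∫ x in S, φ x ∂μ| := by
  set P : Set ℝ := {x | 0 ≤ φ x} with hP
  have hPm : MeasurableSet P := measurableSet_le measurable_const hφm
  have hfφi : Integrable (fun x => f x * φ x) μ := by
    refine Integrable.mono' hφi.abs ((hf.mul hφm).aestronglyMeasurable) (ae_of_all _ fun x => ?_)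
    rw [Real.norm_eq_abs, abs_mul]
    have h1 : |f x| ≤ 1 := by rw [abs_of_nonneg (hf0 x)]; exact hf1 x
    nlinarith [abs_nonneg (φ x)]
  have hsplit : ∫ x, f x * φ x ∂μ = (∫ x in P, f x * φ x ∂μ) + ∫ x in Pᶜ, f x * φ x ∂μ :=
    (integral_add_compl hPm hfφi).symm
  have h1 : ∫ x in P, f x * φ x ∂μ ≤ ∫ x in P, φ x ∂μ := by
    refine setIntegral_mono_on (hfφi.restrict) (hφi.restrict) hPm (fun x hx => ?_)
    have hx0 : 0 ≤ φ x := hx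
    nlinarith [hf0 x, hf1 x]
  have h2 : 0 ≤ ∫ x in P, f x * φ x ∂μ := by
    refine setIntegral_nonneg hPm (fun x hx => ?_)
    exact mul_nonneg (hf0 x) hx
  have h3 : ∫ x in Pᶜ, φ x ∂μ ≤ ∫ x in Pᶜ, f x * φ x ∂μ := by
    refine setIntegral_mono_on (hφi.restrict) (hfφi.restrict) hPm.compl (fun x hx => ?_)
    have hx0 : φ x ≤ 0 := le_of_lt (by simpa [P, not_le] using hx)
    nlinarith [hf0 x, hf1 x]
  have h4 : ∫ x in Pᶜ, f x * φ x ∂μ ≤ 0 := by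
    have : ∀ x ∈ Pᶜ, f x * φ x ≤ 0 := by
      intro x hx
      have hx0 : φ x ≤ 0 := le_of_lt (by simpa [P, not_le] using hx)
      nlinarith [hf0 x, hf1 x]
    calc ∫ x in Pᶜ, f x * φ x ∂μ ≤ ∫ _x in Pᶜ, (0:ℝ) ∂μ :=
          setIntegral_mono_on (hfφi.restrict) (integrable_const 0) hPm.compl this
      _ = 0 := by simp
  rcases le_total 0 (∫ x, f x * φ x ∂μ) with h | h
  · refine ⟨P, hPm, ?_⟩
    rw [abs_of_nonneg h]
    calc ∫ x, f x * φ x ∂μ ≤ (∫ x in P, φ x ∂μ) + ∫ x in Pᶜ, f x * φ x ∂μ := by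
          rw [hsplit]; linarith
      _ ≤ ∫ x in P, φ x ∂μ := by linarith
      _ ≤ |∫ x in P, φ x ∂μ| := le_abs_self _
  · refine ⟨Pᶜ, hPm.compl, ?_⟩
    rw [abs_of_nonpos h]
    have : ∫ x in Pᶜ, φ x ∂μ ≤ ∫ x, f x * φ x ∂μ := by
      rw [hsplit]; linarith
    calc -(∫ x, f x * φ x ∂μ) ≤ -(∫ x in Pᶜ, φ x ∂μ) := by linarith
      _ ≤ |∫ x in Pᶜ, φ x ∂μ| := neg_le_abs _


lemma restrict_eq_of_subset {S : Set ℝ} (hSm : MeasurableSet S) :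
    μ.restrict S = volume.restrict (S ∩ I01) := by
  rw [μ, Measure.restrict_restrict hSm]

/-- Bilinear smoothing bound: weighted pairings are dominated by the cut norm. -/
lemma bilinear_bound {D : ℝ → ℝ → ℝ} (hD : Measurable fun p : ℝ × ℝ => D p.1 p.2)
    (hDbd : ∀ x y, |D x y| ≤ 2) {f g : ℝ → ℝ} (hf : Measurable f)
    (hf01 : ∀ x, f x ∈ Set.Icc (0:ℝ) 1) (hg : Measurable g)
    (hg01 : ∀ x, g x ∈ Set.Icc (0:ℝ) 1) :
    |∫ x, f x * ∫ y, g y * D x y ∂μ ∂μ| ≤ cutNorm D := by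
  set φ : ℝ → ℝ := fun x => ∫ y, g y * D x y ∂μ with hφ
  have hgD : ∀ x y, |g y * D x y| ≤ 2 := by
    intro x y
    rw [abs_mul]
    have h1 : |g y| ≤ 1 := abs_le.2 ⟨by linarith [(hg01 y).1], (hg01 y).2⟩
    nlinarith [abs_nonneg (D x y), hDbd x y, abs_nonneg (g y)]
  have hφm : Measurable φ := by
    apply (Measurable.stronglyMeasurable ?_).integral_prod_right (ν := μ) |>.measurable
    exact (hg.comp measurable_snd).mul (hD.comp (measurable_fst.prodMk measurable_snd))
  have hφbd : ∀ x, |φ x| ≤ 2 := by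
    intro x
    have : ‖∫ y, g y * D x y ∂μ‖ ≤ 2 * (μ Set.univ).toReal := by
      refine norm_integral_le_of_norm_le_const (ae_of_all _ fun y => ?_)
      rw [Real.norm_eq_abs]; exact hgD x y
    simpa [Real.norm_eq_abs, hφ, measure_univ] using this
  have hφi : Integrable φ μ := integrable_of_bdd hφm.aestronglyMeasurable hφbd
  obtain ⟨S, hSm, hS⟩ := stepA hφm hφi hf (fun x => (hf01 x).1) (fun x => (hf01 x).2)
  -- swap inner integral
  have hswap1 : ∫ x in S, φ x ∂μ = ∫ y, g y * ∫ x in S, D x y ∂μ ∂μ := by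
    haveI : IsFiniteMeasure (μ.restrict S) :=
      ⟨by rw [Measure.restrict_apply_univ]; exact measure_lt_top μ S⟩
    have hint : Integrable (Function.uncurry fun x y => g y * D x y) ((μ.restrict S).prod μ) := by
      refine integrable_of_bdd ?_ (C := 2) (fun p => hgD p.1 p.2)
      exact ((hg.comp measurable_snd).mul
        (hD.comp (measurable_fst.prodMk measurable_snd))).aestronglyMeasurable
    calc ∫ x in S, φ x ∂μ = ∫ y, ∫ x in S, g y * D x y ∂μ ∂μ := integral_integral_swap hint
      _ = ∫ y, g y * ∫ x in S, D x y ∂μ ∂μ := by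
          congr 1; funext y; exact integral_const_mul (g y) _
  set ψ : ℝ → ℝ := fun y => ∫ x in S, D x y ∂μ with hψ
  have hψm : Measurable ψ := by
    apply (Measurable.stronglyMeasurable ?_).integral_prod_right (ν := μ.restrict S) |>.measurable
    exact hD.comp (measurable_snd.prodMk measurable_fst)
  have hψbd : ∀ y, |ψ y| ≤ 2 := by
    intro y
    have h2 : ‖∫ x in S, D x y ∂μ‖ ≤ 2 * (μ S).toReal := by
      refine norm_setIntegral_le_of_norm_le_const ?_ (fun x _ => ?_)
      · exact lt_of_le_of_lt (measure_mono (Set.subset_univ S)) (by simp)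
      · simpa [Real.norm_eq_abs] using hDbd x y
    have h3 : (μ S).toReal ≤ 1 := by
      have := measure_mono (Set.subset_univ S) (μ := μ)
      rw [measure_univ] at this
      simpa using ENNReal.toReal_mono (by norm_num) this
    rw [Real.norm_eq_abs] at h2
    calc |ψ y| ≤ 2 * (μ S).toReal := h2
      _ ≤ 2 := by nlinarith
  have hψi : Integrable ψ μ := integrable_of_bdd hψm.aestronglyMeasurable hψbd
  obtain ⟨T, hTm, hT⟩ := stepA hψm hψi hg (fun x => (hg01 x).1) (fun x => (hg01 x).2)
  have hswap2 : ∫ y in T, ψ y ∂μ = ∫ x in S, ∫ y in T, D x y ∂μ ∂μ := by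
    haveI : IsFiniteMeasure (μ.restrict S) :=
      ⟨by rw [Measure.restrict_apply_univ]; exact measure_lt_top μ S⟩
    haveI : IsFiniteMeasure (μ.restrict T) :=
      ⟨by rw [Measure.restrict_apply_univ]; exact measure_lt_top μ T⟩
    have hint : Integrable (Function.uncurry fun y x => D x y) ((μ.restrict T).prod (μ.restrict S)) := by
      refine integrable_of_bdd ?_ (C := 2) (fun p => hDbd p.2 p.1)
      exact (hD.comp (measurable_snd.prodMk measurable_fst)).aestronglyMeasurable
    exact integral_integral_swap hint
  -- assemble
  have key : |∫ x, f x * φ x ∂μ| ≤ |∫ x in S, ∫ y in T, D x y ∂μ ∂μ| := by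
    calc |∫ x, f x * φ x ∂μ| ≤ |∫ x in S, φ x ∂μ| := hS
      _ = |∫ y, g y * ψ y ∂μ| := by rw [hswap1]
      _ ≤ |∫ y in T, ψ y ∂μ| := hT
      _ = |∫ x in S, ∫ y in T, D x y ∂μ ∂μ| := by rw [hswap2]
  refine le_trans key (le_csSup (cutSet_bddAbove hDbd) ?_)
  refine ⟨S ∩ I01, T ∩ I01, hSm.inter measurableSet_Icc, hTm.inter measurableSet_Icc,
    Set.inter_subset_right, Set.inter_subset_right, ?_⟩
  have h1 : ∀ x, ∫ y in T, D x y ∂μ = ∫ y in T ∩ I01, D x y := by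
    intro x; rw [restrict_eq_of_subset hTm]
  have h2 : ∫ x in S, ∫ y in T, D x y ∂μ ∂μ = ∫ x in S ∩ I01, ∫ y in T ∩ I01, D x y := by
    rw [restrict_eq_of_subset hSm]
    exact setIntegral_congr_fun (hSm.inter measurableSet_Icc) (fun x _ => h1 x)
  rw [h2]

/-- Conditioned version: integrate the bilinear bound over an auxiliary probability space. -/
lemma outer_bound {α : Type*} [MeasurableSpace α] (ρ : Measure α) [IsProbabilityMeasure ρ]
    {D : ℝ → ℝ → ℝ} (hD : Measurable fun p : ℝ × ℝ => D p.1 p.2)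
    (hDbd : ∀ x y, |D x y| ≤ 2)
    {f g : α → ℝ → ℝ} (hf : Measurable fun p : α × ℝ => f p.1 p.2)
    (hf01 : ∀ z x, f z x ∈ Set.Icc (0:ℝ) 1)
    (hg : Measurable fun p : α × ℝ => g p.1 p.2)
    (hg01 : ∀ z x, g z x ∈ Set.Icc (0:ℝ) 1) :
    |∫ z, ∫ s, f z s * ∫ t, g z t * D s t ∂μ ∂μ ∂ρ| ≤ cutNorm D := by
  set I : α → ℝ := fun z => ∫ s, f z s * ∫ t, g z t * D s t ∂μ ∂μ with hI
  have hb : ∀ z, |I z| ≤ cutNorm D := by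
    intro z
    refine bilinear_bound hD hDbd ?_ (fun x => hf01 z x) ?_ (fun x => hg01 z x)
    · exact hf.comp (measurable_const.prodMk measurable_id)
    · exact hg.comp (measurable_const.prodMk measurable_id)
  have hIm : Measurable I := by
    have hinner : Measurable fun p : α × ℝ => ∫ t, g p.1 t * D p.2 t ∂μ := by
      apply (Measurable.stronglyMeasurable ?_).integral_prod_right (ν := μ) |>.measurable
      exact (hg.comp (measurable_fst.fst.prodMk measurable_snd)).mul
        (hD.comp ((measurable_fst.snd).prodMk measurable_snd))
    have hm2 : Measurable fun p : α × ℝ => f p.1 p.2 * ∫ t, g p.1 t * D p.2 t ∂μ := hf.mul hinner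
    exact (Measurable.stronglyMeasurable hm2).integral_prod_right' (ν := μ) |>.measurable
  have hIbd : ∀ z, |I z| ≤ 4 := by
    intro z
    have : ‖∫ s, f z s * ∫ t, g z t * D s t ∂μ ∂μ‖ ≤ 4 * (μ Set.univ).toReal := by
      refine norm_integral_le_of_norm_le_const (ae_of_all _ fun s => ?_)
      have hb2 : ‖∫ t, g z t * D s t ∂μ‖ ≤ 2 := by
        have h0 : ‖∫ t, g z t * D s t ∂μ‖ ≤ 2 * (μ Set.univ).toReal := by
          refine norm_integral_le_of_norm_le_const (ae_of_all _ fun t => ?_)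
          rw [Real.norm_eq_abs, abs_mul]
          have h1 : |g z t| ≤ 1 := abs_le.2 ⟨by linarith [(hg01 z t).1], (hg01 z t).2⟩
          nlinarith [abs_nonneg (D s t), hDbd s t, abs_nonneg (g z t)]
        simpa [measure_univ] using h0
      rw [Real.norm_eq_abs, abs_mul]
      have h1 : |f z s| ≤ 1 := abs_le.2 ⟨by linarith [(hf01 z s).1], (hf01 z s).2⟩
      rw [Real.norm_eq_abs] at hb2
      nlinarith [abs_nonneg (f z s), abs_nonneg (∫ t, g z t * D s t ∂μ)]
    simpa [Real.norm_eq_abs, hI, measure_univ] using this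
  have hIi : Integrable I ρ := integrable_of_bdd hIm.aestronglyMeasurable hIbd
  calc |∫ z, I z ∂ρ| ≤ ∫ z, |I z| ∂ρ := by
        simpa [Real.norm_eq_abs] using norm_integral_le_integral_norm I (μ := ρ)
    _ ≤ ∫ _z, cutNorm D ∂ρ := integral_mono hIi.abs (integrable_const _) hb
    _ = cutNorm D := by simp


section Decomp

variable {q : ℕ}

def pij (i j k : Fin q) : Prop := k = i ∨ k = j

def tau (i j : Fin q) (hij : i ≠ j) : Fin 2 ≃ Subtype (pij i j) where
  toFun n := if n = 0 then ⟨i, Or.inl rfl⟩ else ⟨j, Or.inr rfl⟩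
  invFun k := if k.1 = i then 0 else 1
  left_inv n := by
    fin_cases n
    · simp
    · simp [Ne.symm hij]
  right_inv k := by
    rcases k with ⟨k, hk⟩
    rcases hk with h | h
    · subst h; simp
    · subst h; simp [Ne.symm hij]

def Phimap (i j : Fin q) (s t : ℝ) (z : {k : Fin q // ¬ pij i j k} → ℝ) : Fin q → ℝ :=
  fun k => if h : pij i j k then (if k = i then s else t) else z ⟨k, h⟩

lemma measurable_Phimap (i j : Fin q) :
    Measurable (fun w : ({k : Fin q // ¬ pij i j k} → ℝ) × ℝ × ℝ =>
      Phimap i j w.2.1 w.2.2 w.1) := by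
  apply measurable_pi_lambda
  intro k
  by_cases h : pij i j k
  · simp only [Phimap, dif_pos h]
    by_cases h2 : k = i
    · simp only [if_pos h2]; exact measurable_snd.fst
    · simp only [if_neg h2]; exact measurable_snd.snd
  · simp only [Phimap, dif_neg h]
    exact (measurable_pi_apply _).comp measurable_fst

lemma integral_pi_decomp (i j : Fin q) (hij : i ≠ j) {F : (Fin q → ℝ) → ℝ}
    (hmeas : Measurable F) {C : ℝ} (hbd : ∀ x, |F x| ≤ C) :
    ∫ x, F x ∂(Measure.pi fun _ : Fin q => μ)
      = ∫ z, (∫ s, ∫ t, F (Phimap i j s t z) ∂μ ∂μ)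
          ∂(Measure.pi fun _ : {k : Fin q // ¬ pij i j k} => μ) := by
  classical
  set ρp : Measure (Subtype (pij i j) → ℝ) := Measure.pi fun _ => μ with hρp
  set ρ : Measure ({k : Fin q // ¬ pij i j k} → ℝ) := Measure.pi fun _ => μ with hρ
  set e1 := MeasurableEquiv.piEquivPiSubtypeProd (fun _ : Fin q => ℝ) (pij i j) with he1
  have h1 : MeasurePreserving e1 (Measure.pi fun _ : Fin q => μ) (ρp.prod ρ) :=
    measurePreserving_piEquivPiSubtypeProd (fun _ : Fin q => μ) (pij i j)
  set e2 := (MeasurableEquiv.finTwoArrow (α := ℝ)).symm.trans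
      (MeasurableEquiv.piCongrLeft (fun _ => ℝ) (tau i j hij)) with he2
  have h2 : MeasurePreserving (MeasurableEquiv.piCongrLeft (fun _ => ℝ) (tau i j hij))
      (Measure.pi fun _ : Fin 2 => μ) ρp := measurePreserving_piCongrLeft (fun _ => μ) _
  have h3 : MeasurePreserving (MeasurableEquiv.finTwoArrow (α := ℝ))
      (Measure.pi fun _ : Fin 2 => μ) (μ.prod μ) := measurePreserving_finTwoArrow μ
  have h4 : MeasurePreserving e2 (μ.prod μ) ρp := h2.comp (h3.symm _)
  -- key pointwise identity
  have hpoint : ∀ (s t : ℝ) (z : {k : Fin q // ¬ pij i j k} → ℝ),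
      e1.symm (e2 (s, t), z) = Phimap i j s t z := by
    intro s t z
    funext k
    show (Equiv.piEquivPiSubtypeProd (pij i j) (fun _ => ℝ)).symm (e2 (s, t), z) k = _
    rw [Equiv.piEquivPiSubtypeProd_symm_apply]
    by_cases h : pij i j k
    · rw [dif_pos h]
      simp only [Phimap, dif_pos h]
      have : e2 (s, t) = Equiv.piCongrLeft (fun _ => ℝ) (tau i j hij)
          ((MeasurableEquiv.finTwoArrow (α := ℝ)).symm (s, t)) := rfl
      rw [this]
      by_cases h2 : k = i
      · have hk : (⟨k, h⟩ : Subtype (pij i j)) = tau i j hij 0 := by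
          apply Subtype.ext; simp [tau, h2]
        rw [hk, Equiv.piCongrLeft_apply_apply, if_pos h2]
        rfl
      · have hkj : k = j := by
          rcases h with h' | h'
          · exact absurd h' h2
          · exact h'
        have hk : (⟨k, h⟩ : Subtype (pij i j)) = tau i j hij 1 := by
          apply Subtype.ext; simp [tau, hkj]
        rw [hk, Equiv.piCongrLeft_apply_apply, if_neg h2]
        rfl
    · rw [dif_neg h]
      simp only [Phimap, dif_neg h]
  -- integrability
  haveI : IsProbabilityMeasure (ρp.prod ρ) := by infer_instance
  have hint : Integrable (fun y => F (e1.symm y)) (ρp.prod ρ) :=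
    integrable_of_bdd ((hmeas.comp e1.symm.measurable).aestronglyMeasurable)
      (fun y => hbd _)
  have step1 : ∫ x, F x ∂(Measure.pi fun _ : Fin q => μ)
      = ∫ y, F (e1.symm y) ∂(ρp.prod ρ) := by
    rw [← h1.integral_comp' (fun y => F (e1.symm y))]
    simp
  have step2 : ∫ y, F (e1.symm y) ∂(ρp.prod ρ)
      = ∫ v, ∫ z, F (e1.symm (v, z)) ∂ρ ∂ρp := integral_prod _ hint
  have hint2 : Integrable (Function.uncurry fun v z => F (e1.symm (v, z))) (ρp.prod ρ) := hint
  have step3 : ∫ v, ∫ z, F (e1.symm (v, z)) ∂ρ ∂ρp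
      = ∫ z, ∫ v, F (e1.symm (v, z)) ∂ρp ∂ρ := integral_integral_swap hint2
  have step4 : ∀ z, ∫ v, F (e1.symm (v, z)) ∂ρp
      = ∫ s, ∫ t, F (Phimap i j s t z) ∂μ ∂μ := by
    intro z
    have hcomp : ∫ v, F (e1.symm (v, z)) ∂ρp
        = ∫ w, F (e1.symm (e2 w, z)) ∂(μ.prod μ) :=
      (h4.integral_comp' (fun v => F (e1.symm (v, z)))).symm
    have hint3 : Integrable (fun w : ℝ × ℝ => F (e1.symm (e2 w, z))) (μ.prod μ) := by
      refine integrable_of_bdd ?_ (fun w => hbd _)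
      exact (hmeas.comp (e1.symm.measurable.comp
        ((e2.measurable.comp measurable_id).prodMk measurable_const))).aestronglyMeasurable
    rw [hcomp, integral_prod _ hint3]
    congr 1
    funext s
    congr 1
    funext t
    rw [hpoint s t z]
  rw [step1, step2, step3]
  exact integral_congr_ae (ae_of_all _ step4)


lemma Phimap_eq_update_j (i j : Fin q) (hij : i ≠ j) (s t : ℝ)
    (z : {k : Fin q // ¬ pij i j k} → ℝ) :
    Phimap i j s t z = Function.update (Phimap i j s 0 z) j t := by
  funext k
  by_cases hk : k = j
  · rw [hk, Function.update_self]
    show (if h : pij i j j then (if j = i then s else t) else _) = t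
    rw [dif_pos (show pij i j j from Or.inr rfl), if_neg (fun h => hij h.symm)]
  · rw [Function.update_of_ne hk]
    show (if h : pij i j k then (if k = i then s else t) else _)
      = (if h : pij i j k then (if k = i then s else 0) else _)
    by_cases h : pij i j k
    · have hki : k = i := by
        rcases h with h' | h'
        · exact h'
        · exact absurd h' hk
      rw [dif_pos h, dif_pos h, if_pos hki, if_pos hki]
    · rw [dif_neg h, dif_neg h]

lemma Phimap_eq_update_i (i j : Fin q) (hij : i ≠ j) (s t : ℝ)
    (z : {k : Fin q // ¬ pij i j k} → ℝ) :
    Phimap i j s t z = Function.update (Phimap i j 0 t z) i s := by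
  funext k
  by_cases hk : k = i
  · rw [hk, Function.update_self]
    show (if h : pij i j i then (if i = i then s else t) else _) = s
    rw [dif_pos (show pij i j i from Or.inl rfl), if_pos rfl]
  · rw [Function.update_of_ne hk]
    show (if h : pij i j k then (if k = i then s else t) else _)
      = (if h : pij i j k then (if k = i then 0 else t) else _)
    by_cases h : pij i j k
    · rw [dif_pos h, dif_pos h, if_neg hk, if_neg hk]
    · rw [dif_neg h, dif_neg h]

lemma Phimap_apply_i (i j : Fin q) (s t : ℝ) (z : {k : Fin q // ¬ pij i j k} → ℝ) :
    Phimap i j s t z i = s := by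
  show (if h : pij i j i then (if i = i then s else t) else _) = s
  rw [dif_pos (show pij i j i from Or.inl rfl), if_pos rfl]

lemma Phimap_apply_j (i j : Fin q) (hij : i ≠ j) (s t : ℝ)
    (z : {k : Fin q // ¬ pij i j k} → ℝ) :
    Phimap i j s t z j = t := by
  show (if h : pij i j j then (if j = i then s else t) else _) = t
  rw [dif_pos (show pij i j j from Or.inr rfl), if_neg (fun h => hij h.symm)]

/-- Core bound: integrals of products with separated dependence are controlled by the cut norm. -/
lemma core_bound (i j : Fin q) (hij : i ≠ j)
    {D : ℝ → ℝ → ℝ} (hD : Measurable fun p : ℝ × ℝ => D p.1 p.2) (hDbd : ∀ x y, |D x y| ≤ 2)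
    {F G : (Fin q → ℝ) → ℝ} (hFm : Measurable F) (hGm : Measurable G)
    (hF01 : ∀ x, F x ∈ Set.Icc (0:ℝ) 1) (hG01 : ∀ x, G x ∈ Set.Icc (0:ℝ) 1)
    (hFind : ∀ x t, F (Function.update x j t) = F x)
    (hGind : ∀ x s, G (Function.update x i s) = G x) :
    |∫ x, F x * G x * D (x i) (x j) ∂(Measure.pi fun _ : Fin q => μ)| ≤ cutNorm D := by
  set f : ({k : Fin q // ¬ pij i j k} → ℝ) → ℝ → ℝ := fun z s => F (Phimap i j s 0 z) with hf
  set g : ({k : Fin q // ¬ pij i j k} → ℝ) → ℝ → ℝ := fun z t => G (Phimap i j 0 t z) with hg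
  have hFphi : ∀ s t z, F (Phimap i j s t z) = f z s := by
    intro s t z
    rw [Phimap_eq_update_j i j hij s t z, hFind]
  have hGphi : ∀ s t z, G (Phimap i j s t z) = g z t := by
    intro s t z
    rw [Phimap_eq_update_i i j hij s t z, hGind]
  have hDij : Measurable fun x : Fin q → ℝ => D (x i) (x j) := by
    exact hD.comp (((measurable_pi_apply i).prodMk (measurable_pi_apply j) :
      Measurable fun x : Fin q → ℝ => (x i, x j)))
  have hFfm : Measurable fun x : Fin q → ℝ => F x * G x * D (x i) (x j) :=
    (hFm.mul hGm).mul hDij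
  have hFfbd : ∀ x, |F x * G x * D (x i) (x j)| ≤ 2 := by
    intro x
    rw [abs_mul, abs_mul]
    have h1 : |F x| ≤ 1 := abs_le.2 ⟨by linarith [(hF01 x).1], (hF01 x).2⟩
    have h2 : |G x| ≤ 1 := abs_le.2 ⟨by linarith [(hG01 x).1], (hG01 x).2⟩
    have h3 : |F x| * |G x| ≤ 1 := by nlinarith [abs_nonneg (F x), abs_nonneg (G x)]
    nlinarith [abs_nonneg (D (x i) (x j)), hDbd (x i) (x j),
      mul_nonneg (abs_nonneg (F x)) (abs_nonneg (G x))]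
  rw [integral_pi_decomp i j hij hFfm hFfbd]
  have hrw : ∀ z, (∫ s, ∫ t, F (Phimap i j s t z) * G (Phimap i j s t z) *
        D (Phimap i j s t z i) (Phimap i j s t z j) ∂μ ∂μ)
      = ∫ s, f z s * ∫ t, g z t * D s t ∂μ ∂μ := by
    intro z
    congr 1
    funext s
    rw [← integral_const_mul]
    congr 1
    funext t
    rw [hFphi s t z, hGphi s t z, Phimap_apply_i, Phimap_apply_j i j hij]
    ring
  have : (∫ z, (∫ s, ∫ t, F (Phimap i j s t z) * G (Phimap i j s t z) *
        D (Phimap i j s t z i) (Phimap i j s t z j) ∂μ ∂μ)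
          ∂(Measure.pi fun _ : {k : Fin q // ¬ pij i j k} => μ))
      = ∫ z, ∫ s, f z s * ∫ t, g z t * D s t ∂μ ∂μ
          ∂(Measure.pi fun _ : {k : Fin q // ¬ pij i j k} => μ) :=
    integral_congr_ae (ae_of_all _ hrw)
  rw [this]
  refine outer_bound _ hD hDbd ?_ (fun z s => hF01 _) ?_ (fun z t => hG01 _)
  · exact hFm.comp ((measurable_Phimap i j).comp
      (measurable_fst.prodMk (measurable_snd.prodMk measurable_const)))
  · exact hGm.comp ((measurable_Phimap i j).comp
      (measurable_fst.prodMk (measurable_const.prodMk measurable_snd)))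

end Decomp

section Main

variable {q : ℕ}

abbrev Edg (q : ℕ) := {p : Fin q × Fin q // p.1 < p.2}

abbrev LabG (q : ℕ) := Edg q → Bool

def efactor (V : ℝ → ℝ → ℝ) (H : LabG q) (e : Edg q) (x : Fin q → ℝ) : ℝ :=
  if H e then V (x e.1.1) (x e.1.2) else 1 - V (x e.1.1) (x e.1.2)

lemma efactor_measurable {V : ℝ → ℝ → ℝ} (hV : Measurable fun p : ℝ × ℝ => V p.1 p.2)
    (H : LabG q) (e : Edg q) : Measurable (efactor V H e) := by
  have hbase : Measurable fun x : Fin q → ℝ => V (x e.1.1) (x e.1.2) := by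
    exact hV.comp (((measurable_pi_apply e.1.1).prodMk (measurable_pi_apply e.1.2) :
      Measurable fun x : Fin q → ℝ => (x e.1.1, x e.1.2)))
  unfold efactor
  by_cases h : H e
  · simp only [if_pos h]; exact hbase
  · simp only [if_neg h]; exact measurable_const.sub hbase

lemma efactor_mem {V : ℝ → ℝ → ℝ} (hVbd : ∀ x y, V x y ∈ Set.Icc (0:ℝ) 1)
    (H : LabG q) (e : Edg q) (x : Fin q → ℝ) : efactor V H e x ∈ Set.Icc (0:ℝ) 1 := by
  unfold efactor
  rcases hVbd (x e.1.1) (x e.1.2) with ⟨h0, h1⟩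
  by_cases h : H e
  · simp only [if_pos h]; exact ⟨h0, h1⟩
  · simp only [if_neg h]; constructor <;> [linarith; linarith]

lemma efactor_update {V : ℝ → ℝ → ℝ} (H : LabG q) (e : Edg q) {k : Fin q}
    (h1 : e.1.1 ≠ k) (h2 : e.1.2 ≠ k) (x : Fin q → ℝ) (t : ℝ) :
    efactor V H e (Function.update x k t) = efactor V H e x := by
  unfold efactor
  rw [Function.update_of_ne h1, Function.update_of_ne h2]

lemma prod_efactor_measurable {V : ℝ → ℝ → ℝ} (hV : Measurable fun p : ℝ × ℝ => V p.1 p.2)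
    (H : LabG q) (f : Edg q → (Fin q → ℝ) → ℝ) (hf : ∀ e, f e = efactor V H e)
    (S : Finset (Edg q)) : Measurable fun x => ∏ e ∈ S, f e x := by
  apply Finset.measurable_prod
  intro e _
  rw [hf e]
  exact efactor_measurable hV H e

/-- The telescoping induction. -/
lemma tele_bound (U W : ℝ → ℝ → ℝ)
    (hUmeas : Measurable fun p : ℝ × ℝ => U p.1 p.2)
    (hWmeas : Measurable fun p : ℝ × ℝ => W p.1 p.2)
    (hUbd : ∀ x y, U x y ∈ Set.Icc (0 : ℝ) 1)
    (hWbd : ∀ x y, W x y ∈ Set.Icc (0 : ℝ) 1)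
    (H : LabG q) (R : Finset (Edg q)) :
    ∀ S : Finset (Edg q), Disjoint R S →
      |∫ x, ((∏ e ∈ R, efactor W H e x) - (∏ e ∈ R, efactor U H e x)) *
          (∏ e ∈ S, efactor U H e x) ∂(Measure.pi fun _ : Fin q => μ)|
        ≤ R.card * cutNorm (fun x y => U x y - W x y) := by
  classical
  set D : ℝ → ℝ → ℝ := fun x y => U x y - W x y with hD
  have hDm : Measurable fun p : ℝ × ℝ => D p.1 p.2 := hUmeas.sub hWmeas
  have hDbd : ∀ x y, |D x y| ≤ 2 := by
    intro x y
    rcases hUbd x y with ⟨hu0, hu1⟩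
    rcases hWbd x y with ⟨hw0, hw1⟩
    rw [abs_le]; constructor <;> simp [hD] <;> linarith
  induction R using Finset.induction_on with
  | empty =>
      intro S _
      simp
  | @insert a R ha ih =>
      intro S hdisj
      have hdisjRS : Disjoint R S := Finset.disjoint_insert_left.mp hdisj |>.2
      have haS : a ∉ S := Finset.disjoint_insert_left.mp hdisj |>.1
      set i : Fin q := a.1.1 with hi
      set j : Fin q := a.1.2 with hj
      have hijlt : i < j := a.2
      have hij : i ≠ j := ne_of_lt hijlt
      -- decompose the integrand
      set fW : Edg q → (Fin q → ℝ) → ℝ := fun e => efactor W H e with hfW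
      set fU : Edg q → (Fin q → ℝ) → ℝ := fun e => efactor U H e with hfU
      set g : Edg q → (Fin q → ℝ) → ℝ := fun e x => if e ∈ R then fW e x else fU e x with hg
      set Pj : Edg q → Prop := fun e => e.1.1 = j ∨ e.1.2 = j with hPj
      set Ff : (Fin q → ℝ) → ℝ := fun x => ∏ e ∈ (R ∪ S).filter (fun e => ¬ Pj e), g e x with hFf
      set Gg : (Fin q → ℝ) → ℝ := fun x => ∏ e ∈ (R ∪ S).filter Pj, g e x with hGg
      have hmerge : ∀ x, (∏ e ∈ R, fW e x) * (∏ e ∈ S, fU e x) = Ff x * Gg x := by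
        intro x
        have h1 : (∏ e ∈ R, fW e x) = ∏ e ∈ R, g e x :=
          Finset.prod_congr rfl (fun e he => by simp [hg, he])
        have h2 : (∏ e ∈ S, fU e x) = ∏ e ∈ S, g e x :=
          Finset.prod_congr rfl (fun e he => by
            have : e ∉ R := fun hc => (Finset.disjoint_left.mp hdisjRS hc) he
            simp [hg, this])
        rw [h1, h2, ← Finset.prod_union hdisjRS, hFf, hGg, mul_comm]
        exact (Finset.prod_filter_mul_prod_filter_not (R ∪ S) Pj (g · x)).symm
      have hsgn : ∀ x, fW a x - fU a x = (if H a then (-1:ℝ) else 1) * D (x i) (x j) := by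
        intro x
        by_cases h : H a
        · simp only [hfW, hfU, efactor, hD, if_pos h]
          ring
        · simp only [hfW, hfU, efactor, hD, if_neg h]
          ring
      -- pointwise decomposition of the full integrand
      have hpoint : ∀ x, ((∏ e ∈ insert a R, fW e x) - (∏ e ∈ insert a R, fU e x)) *
            (∏ e ∈ S, fU e x)
          = (if H a then (-1:ℝ) else 1) * (Ff x * Gg x * D (x i) (x j))
            + ((∏ e ∈ R, fW e x) - (∏ e ∈ R, fU e x)) * (∏ e ∈ insert a S, fU e x) := by
        intro x
        rw [Finset.prod_insert ha, Finset.prod_insert ha, Finset.prod_insert haS]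
        have e1 : (fW a x * ∏ e ∈ R, fW e x - fU a x * ∏ e ∈ R, fU e x) * ∏ e ∈ S, fU e x
            = (fW a x - fU a x) * ((∏ e ∈ R, fW e x) * (∏ e ∈ S, fU e x))
              + ((∏ e ∈ R, fW e x) - (∏ e ∈ R, fU e x)) * (fU a x * ∏ e ∈ S, fU e x) := by
          ring
        rw [e1, hmerge x, hsgn x]
        ring
      -- integrability facts
      have hprod_mem : ∀ (V : ℝ → ℝ → ℝ), (∀ x y, V x y ∈ Set.Icc (0:ℝ) 1) →
          ∀ (T : Finset (Edg q)) x, (∏ e ∈ T, efactor V H e x) ∈ Set.Icc (0:ℝ) 1 := by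
        intro V hVbd T x
        constructor
        · exact Finset.prod_nonneg (fun e _ => (efactor_mem hVbd H e x).1)
        · exact Finset.prod_le_one (fun e _ => (efactor_mem hVbd H e x).1)
            (fun e _ => (efactor_mem hVbd H e x).2)
      have hgm : ∀ e : Edg q, Measurable (fun x => g e x) := by
        intro e
        by_cases he : e ∈ R
        · simp only [hg, if_pos he]; exact efactor_measurable hWmeas H e
        · simp only [hg, if_neg he]; exact efactor_measurable hUmeas H e
      have hg01 : ∀ (e : Edg q) x, g e x ∈ Set.Icc (0:ℝ) 1 := by
        intro e x
        by_cases he : e ∈ R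
        · simp only [hg, if_pos he]; exact efactor_mem hWbd H e x
        · simp only [hg, if_neg he]; exact efactor_mem hUbd H e x
      have hFfm : Measurable Ff := Finset.measurable_prod _ (fun e _ => hgm e)
      have hGgm : Measurable Gg := Finset.measurable_prod _ (fun e _ => hgm e)
      have hFf01 : ∀ x, Ff x ∈ Set.Icc (0:ℝ) 1 := by
        intro x
        exact ⟨Finset.prod_nonneg (fun e _ => (hg01 e x).1),
          Finset.prod_le_one (fun e _ => (hg01 e x).1) (fun e _ => (hg01 e x).2)⟩
      have hGg01 : ∀ x, Gg x ∈ Set.Icc (0:ℝ) 1 := by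
        intro x
        exact ⟨Finset.prod_nonneg (fun e _ => (hg01 e x).1),
          Finset.prod_le_one (fun e _ => (hg01 e x).1) (fun e _ => (hg01 e x).2)⟩
      have hgupd : ∀ (e : Edg q) {k : Fin q}, e.1.1 ≠ k → e.1.2 ≠ k → ∀ x t,
          g e (Function.update x k t) = g e x := by
        intro e k h1 h2 x t
        by_cases he : e ∈ R
        · simp only [hg, if_pos he, hfW]; exact efactor_update H e h1 h2 x t
        · simp only [hg, if_neg he, hfU]; exact efactor_update H e h1 h2 x t
      have hFind : ∀ x t, Ff (Function.update x j t) = Ff x := by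
        intro x t
        refine Finset.prod_congr rfl (fun e he => ?_)
        rcases Finset.mem_filter.mp he with ⟨_, hnot⟩
        simp only [hPj] at hnot
        push_neg at hnot
        exact hgupd e hnot.1 hnot.2 x t
      have hGind : ∀ x s, Gg (Function.update x i s) = Gg x := by
        intro x s
        refine Finset.prod_congr rfl (fun e he => ?_)
        rcases Finset.mem_filter.mp he with ⟨heRS, hPje⟩
        have hne : e ≠ a := by
          intro hc
          subst hc
          rcases Finset.mem_union.mp heRS with h' | h'
          · exact ha h'
          · exact haS h'
        have h1 : e.1.1 ≠ i := by
          intro hcon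
          rcases hPje with h' | h'
          · exact hij (hcon.symm.trans h')
          · exact hne (Subtype.ext (Prod.ext hcon h'))
        have h2 : e.1.2 ≠ i := by
          intro hcon
          rcases hPje with h' | h'
          · have hlt := e.2
            rw [h', hcon] at hlt
            exact lt_asymm hijlt hlt
          · exact hij (hcon.symm.trans h')
        exact hgupd e h1 h2 x s
      have hcore := core_bound i j hij hDm hDbd hFfm hGgm hFf01 hGg01 hFind hGind
      -- integral decomposition
      set ν : Measure (Fin q → ℝ) := Measure.pi fun _ : Fin q => μ with hν
      set c : ℝ := if H a then (-1:ℝ) else 1 with hc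
      have hcabs : |c| = 1 := by
        by_cases h : H a
        · simp [hc, h]
        · simp [hc, h]
      set X : (Fin q → ℝ) → ℝ := fun x => Ff x * Gg x * D (x i) (x j) with hX
      set Y : (Fin q → ℝ) → ℝ := fun x =>
        ((∏ e ∈ R, fW e x) - (∏ e ∈ R, fU e x)) * (∏ e ∈ insert a S, fU e x) with hY
      have hXm : Measurable X := (hFfm.mul hGgm).mul (by
        exact hDm.comp (((measurable_pi_apply i).prodMk (measurable_pi_apply j) :
          Measurable fun x : Fin q → ℝ => (x i, x j))))
      have hXbd : ∀ x, |X x| ≤ 2 := by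
        intro x
        rw [hX, abs_mul, abs_mul]
        have h1 : |Ff x| ≤ 1 := abs_le.2 ⟨by linarith [(hFf01 x).1], (hFf01 x).2⟩
        have h2 : |Gg x| ≤ 1 := abs_le.2 ⟨by linarith [(hGg01 x).1], (hGg01 x).2⟩
        have h3 : |Ff x| * |Gg x| ≤ 1 := by nlinarith [abs_nonneg (Ff x), abs_nonneg (Gg x)]
        nlinarith [abs_nonneg (D (x i) (x j)), hDbd (x i) (x j),
          mul_nonneg (abs_nonneg (Ff x)) (abs_nonneg (Gg x))]
      have hXi : Integrable X ν := integrable_of_bdd hXm.aestronglyMeasurable hXbd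
      have hYm : Measurable Y := by
        refine (Measurable.sub ?_ ?_).mul ?_
        · exact prod_efactor_measurable hWmeas H fW (fun e => rfl) R
        · exact prod_efactor_measurable hUmeas H fU (fun e => rfl) R
        · exact prod_efactor_measurable hUmeas H fU (fun e => rfl) (insert a S)
      have hYbd : ∀ x, |Y x| ≤ 2 := by
        intro x
        rw [hY, abs_mul]
        rcases hprod_mem W hWbd R x with ⟨hw0, hw1⟩
        rcases hprod_mem U hUbd R x with ⟨hu0, hu1⟩
        rcases hprod_mem U hUbd (insert a S) x with ⟨hs0, hs1⟩
        have h1 : |(∏ e ∈ R, fW e x) - (∏ e ∈ R, fU e x)| ≤ 1 := by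
          rw [abs_le]; constructor <;> [skip; skip] <;> simp only [hfW, hfU] <;> linarith
        have h2 : |∏ e ∈ insert a S, fU e x| ≤ 1 := by
          rw [abs_le]; constructor <;> simp only [hfU] <;> linarith
        nlinarith [abs_nonneg ((∏ e ∈ R, fW e x) - (∏ e ∈ R, fU e x)),
          abs_nonneg (∏ e ∈ insert a S, fU e x)]
      have hYi : Integrable Y ν := integrable_of_bdd hYm.aestronglyMeasurable hYbd
      have hsplit : ∫ x, ((∏ e ∈ insert a R, fW e x) - (∏ e ∈ insert a R, fU e x)) *
            (∏ e ∈ S, fU e x) ∂ν = c * (∫ x, X x ∂ν) + ∫ x, Y x ∂ν := by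
        have h1 : ∫ x, ((∏ e ∈ insert a R, fW e x) - (∏ e ∈ insert a R, fU e x)) *
              (∏ e ∈ S, fU e x) ∂ν = ∫ x, (c * X x + Y x) ∂ν :=
          integral_congr_ae (ae_of_all _ (fun x => hpoint x))
        rw [h1, integral_add (hXi.const_mul c) hYi, integral_const_mul]
      have hIH : |∫ x, Y x ∂ν| ≤ R.card * cutNorm D :=
        ih (insert a S) (Finset.disjoint_insert_right.mpr ⟨ha, hdisjRS⟩)
      calc |∫ x, ((∏ e ∈ insert a R, fW e x) - (∏ e ∈ insert a R, fU e x)) *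
            (∏ e ∈ S, fU e x) ∂ν|
          = |c * (∫ x, X x ∂ν) + ∫ x, Y x ∂ν| := by rw [hsplit]
        _ ≤ |c * ∫ x, X x ∂ν| + |∫ x, Y x ∂ν| := abs_add_le _ _
        _ = |∫ x, X x ∂ν| + |∫ x, Y x ∂ν| := by rw [abs_mul, hcabs, one_mul]
        _ ≤ cutNorm D + R.card * cutNorm D := add_le_add hcore hIH
        _ = (insert a R).card * cutNorm D := by
            rw [Finset.card_insert_of_notMem ha]
            push_cast
            ring


lemma two_card_le (q : ℕ) : 2 * Fintype.card (Edg q) ≤ q ^ 2 := by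
  classical
  have h1 : Fintype.card (Edg q)
      = (Finset.univ.filter (fun p : Fin q × Fin q => p.1 < p.2)).card :=
    Fintype.card_subtype _
  set T := Finset.univ.filter (fun p : Fin q × Fin q => p.1 < p.2) with hT
  set T' := Finset.univ.filter (fun p : Fin q × Fin q => p.2 < p.1) with hT'
  have h2 : T.card = T'.card := by
    refine Finset.card_bij' (fun p _ => (p.2, p.1)) (fun p _ => (p.2, p.1)) ?_ ?_ ?_ ?_
    · intro a ha
      simp only [hT, hT', Finset.mem_filter, Finset.mem_univ, true_and] at ha ⊢
      exact ha
    · intro a ha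
      simp only [hT, hT', Finset.mem_filter, Finset.mem_univ, true_and] at ha ⊢
      exact ha
    · intro a _; rfl
    · intro a _; rfl
  have h3 : Disjoint T T' := by
    rw [Finset.disjoint_left]
    intro p hp hp'
    simp only [hT, hT', Finset.mem_filter, Finset.mem_univ, true_and] at hp hp'
    exact lt_asymm hp hp'
  have h4 : T.card + T'.card ≤ q * q := by
    rw [← Finset.card_union_of_disjoint h3]
    calc (T ∪ T').card ≤ (Finset.univ : Finset (Fin q × Fin q)).card :=
          Finset.card_le_card (Finset.subset_univ _)
      _ = q * q := by simp
  calc 2 * Fintype.card (Edg q) = T.card + T'.card := by rw [h1, ← h2]; ring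
    _ ≤ q * q := h4
    _ = q ^ 2 := (pow_two q).symm

end Main

end TVAux

theorem tv_distance_of_sampled_graphs (U W : ℝ → ℝ → ℝ)
    (hUmeas : Measurable fun p : ℝ × ℝ => U p.1 p.2)
    (hWmeas : Measurable fun p : ℝ × ℝ => W p.1 p.2)
    (hUsym : ∀ x y, U x y = U y x) (hWsym : ∀ x y, W x y = W y x)
    (hUbd : ∀ x y, U x y ∈ Set.Icc (0 : ℝ) 1)
    (hWbd : ∀ x y, W x y ∈ Set.Icc (0 : ℝ) 1)
    (q : ℕ) (hq : 1 ≤ q) :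
    (1 / 2) * ∑ H : LabGraph q, |sampleLaw q W H - sampleLaw q U H| ≤
      (2 : ℝ) ^ (q ^ 2) * (q : ℝ) ^ 2 / 4 * cutNorm (fun x y => U x y - W x y) := by
  classical
  have hDbd : ∀ x y, |(fun x y => U x y - W x y) x y| ≤ 2 := by
    intro x y
    rcases hUbd x y with ⟨hu0, hu1⟩
    rcases hWbd x y with ⟨hw0, hw1⟩
    rw [abs_le]
    constructor <;> simp <;> linarith
  set c := cutNorm (fun x y => U x y - W x y) with hcut
  have hc : 0 ≤ c := TVAux.cutNorm_nonneg (D := fun x y => U x y - W x y) hDbd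
  set m := Fintype.card (TVAux.Edg q) with hm
  have hper : ∀ H : LabGraph q, |sampleLaw q W H - sampleLaw q U H| ≤ (m : ℝ) * c := by
    intro H
    have hprodbd : ∀ (V : ℝ → ℝ → ℝ), (∀ x y, V x y ∈ Set.Icc (0:ℝ) 1) →
        ∀ x : Fin q → ℝ, |∏ e : TVAux.Edg q, TVAux.efactor V H e x| ≤ 1 := by
      intro V hVbd x
      have h0 : 0 ≤ ∏ e : TVAux.Edg q, TVAux.efactor V H e x :=
        Finset.prod_nonneg (fun e _ => (TVAux.efactor_mem hVbd H e x).1)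
      have h1 : (∏ e : TVAux.Edg q, TVAux.efactor V H e x) ≤ 1 :=
        Finset.prod_le_one (fun e _ => (TVAux.efactor_mem hVbd H e x).1)
          (fun e _ => (TVAux.efactor_mem hVbd H e x).2)
      rw [abs_le]; exact ⟨by linarith, h1⟩
    have hWint : Integrable (fun x => ∏ e : TVAux.Edg q, TVAux.efactor W H e x)
        (Measure.pi fun _ : Fin q => TVAux.μ) :=
      TVAux.integrable_of_bdd
        ((TVAux.prod_efactor_measurable hWmeas H _ (fun _ => rfl)
          Finset.univ).aestronglyMeasurable) (hprodbd W hWbd)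
    have hUint : Integrable (fun x => ∏ e : TVAux.Edg q, TVAux.efactor U H e x)
        (Measure.pi fun _ : Fin q => TVAux.μ) :=
      TVAux.integrable_of_bdd
        ((TVAux.prod_efactor_measurable hUmeas H _ (fun _ => rfl)
          Finset.univ).aestronglyMeasurable) (hprodbd U hUbd)
    have h0W : sampleLaw q W H = ∫ x, ∏ e : TVAux.Edg q, TVAux.efactor W H e x
        ∂(Measure.pi fun _ : Fin q => TVAux.μ) := rfl
    have h0U : sampleLaw q U H = ∫ x, ∏ e : TVAux.Edg q, TVAux.efactor U H e x
        ∂(Measure.pi fun _ : Fin q => TVAux.μ) := rfl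
    have hdiff : sampleLaw q W H - sampleLaw q U H
        = ∫ x, ((∏ e : TVAux.Edg q, TVAux.efactor W H e x)
            - (∏ e : TVAux.Edg q, TVAux.efactor U H e x))
          ∂(Measure.pi fun _ : Fin q => TVAux.μ) := by
      rw [h0W, h0U, ← integral_sub hWint hUint]
    have htb := TVAux.tele_bound U W hUmeas hWmeas hUbd hWbd H Finset.univ ∅
      (Finset.disjoint_empty_right _)
    simp only [Finset.prod_empty, mul_one, Finset.card_univ] at htb
    rw [hdiff]
    exact htb
  have hsum := Finset.sum_le_card_nsmul Finset.univ
    (fun H : LabGraph q => |sampleLaw q W H - sampleLaw q U H|) ((m:ℝ) * c)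
    (fun H _ => hper H)
  rw [Finset.card_univ] at hsum
  have hcard : Fintype.card (LabGraph q) = 2 ^ m := by
    rw [hm, Fintype.card_fun, Fintype.card_bool]
  rw [hcard, nsmul_eq_mul] at hsum
  push_cast at hsum
  have hm2 : 2 * m ≤ q ^ 2 := TVAux.two_card_le q
  have hmle : m ≤ q ^ 2 := by omega
  have h2m : (2:ℝ) ^ m ≤ (2:ℝ) ^ (q ^ 2) := by
    gcongr
    · norm_num
  have hmr : (m:ℝ) ≤ (q:ℝ) ^ 2 / 2 := by
    have h := (Nat.cast_le (α := ℝ)).mpr hm2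
    push_cast at h
    linarith
  have k1 : (2:ℝ) ^ m * (m:ℝ) ≤ (2:ℝ) ^ (q ^ 2) * ((q:ℝ) ^ 2 / 2) :=
    mul_le_mul h2m hmr (Nat.cast_nonneg m) (by positivity)
  have k2 := mul_le_mul_of_nonneg_right k1 hc
  have hhalf : (0:ℝ) ≤ 1/2 := by norm_num
  calc (1 / 2) * ∑ H : LabGraph q, |sampleLaw q W H - sampleLaw q U H|
      ≤ (1 / 2) * ((2:ℝ) ^ m * ((m:ℝ) * c)) := mul_le_mul_of_nonneg_left hsum hhalf
    _ ≤ (2 : ℝ) ^ (q ^ 2) * (q : ℝ) ^ 2 / 4 * c := by nlinarith [k2]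
end
end
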